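/- Typing enforces refinement: let A→m1…mn:B1,…,Bn be a refinable action, and let Π be a set of participants and φ, Λ sets of labels such that (1) sbj(φ) = sbj(Λ) = Π, (2) sbj(φ ∩ L^!) = {A}, and (3) for every 1 ≤ h ≤ n there exists a participant C such that Λ̂(Bh) = {C Bh?mh}. Then for every ground g-choreography G, if Π ⊢ G : ⟨φ,Λ⟩ is derivable then G ref A→m1…mn:B1,…,Bn. -/

import Mathlib

open scoped Classical

namespace Choreo

/-! ## Labels -/

/-- Communication labels: output `A B!m` and input `A B?m`. -/
inductive Label (P M : Type) where
  | out : P → P → M → Label P M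
  | inp : P → P → M → Label P M

variable {P M : Type}

/-- The subject of a label: the sender of an output, the receiver of an input. -/
def Label.sbj : Label P M → P
  | .out a _ _ => a
  | .inp _ b _ => b

/-- The set `L^!` of output labels (sender and receiver distinct). -/
def Lout : Set (Label P M) := {l | ∃ a b m, a ≠ b ∧ l = .out a b m}

/-- The set `L^?` of input labels (sender and receiver distinct). -/
def Lin : Set (Label P M) := {l | ∃ a b m, a ≠ b ∧ l = .inp a b m}

/-- `L̂(A)`: the labels in `L` whose subject is `A`. -/
def hat (L : Set (Label P M)) (A : P) : Set (Label P M) := {l ∈ L | l.sbj = A}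

/-- `sbj(L)`: the set of subjects of the labels in `L`. -/
def sbjSet (L : Set (Label P M)) : Set P := Label.sbj '' L

/-- `L − Π`: the labels in `L` whose subject is not in `Π`. -/
def lminus (L : Set (Label P M)) (Γ : Set P) : Set (Label P M) := {l ∈ L | l.sbj ∉ Γ}

/-! ## Labelled event structures (events drawn from ℕ) -/

/-- Data of a labelled (prime) event structure over events drawn from `ℕ`. -/
structure ES (P M : Type) where
  ev : Set ℕ
  le : ℕ → ℕ → Prop
  conf : ℕ → ℕ → Prop
  lbl : ℕ → Label P M

namespace ES

variable (E : ES P M)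

/-- Configurations: downward-closed conflict-free sets of events. -/
def Config (x : Set ℕ) : Prop :=
  x ⊆ E.ev ∧ (∀ e ∈ x, ∀ f ∈ E.ev, E.le f e → f ∈ x) ∧
    ∀ e ∈ x, ∀ f ∈ x, ¬ E.conf e f

/-- `MaxC E`: the ⊆-maximal configurations of `E`. -/
def MaxC : Set (Set ℕ) := {x | E.Config x ∧ ∀ y, E.Config y → x ⊆ y → y = x}

/-- Minimal events of `s ⊆ E.ev` with respect to `E.le`. -/
def minIn (s : Set ℕ) : Set ℕ := {e ∈ s | ∀ f ∈ s, E.le f e → f = e}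

/-- Maximal events of `s ⊆ E.ev` with respect to `E.le`. -/
def maxIn (s : Set ℕ) : Set ℕ := {e ∈ s | ∀ f ∈ s, E.le e f → f = e}

def minEv : Set ℕ := E.minIn E.ev
def maxEv : Set ℕ := E.maxIn E.ev

/-- Labels of the minimal events of `E`. -/
def minLbl : Set (Label P M) := E.lbl '' E.minEv

/-- Labels of the maximal events of `E`. -/
def maxLbl : Set (Label P M) := E.lbl '' E.maxEv

/-- All labels occurring in `E`. -/
def lblSet : Set (Label P M) := E.lbl '' E.ev

/-- The projection `E↾A`: the restriction of `E` to the events whose label has subject `A`. -/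
def proj (A : P) : ES P M where
  ev := {e ∈ E.ev | (E.lbl e).sbj = A}
  le u v := E.le u v ∧ (u ∈ E.ev ∧ (E.lbl u).sbj = A) ∧ (v ∈ E.ev ∧ (E.lbl v).sbj = A)
  conf u v := E.conf u v ∧ (u ∈ E.ev ∧ (E.lbl u).sbj = A) ∧ (v ∈ E.ev ∧ (E.lbl v).sbj = A)
  lbl := E.lbl

/-- The projection `x↾A` of a configuration (as a set of events of `E`). -/
def projC (x : Set ℕ) (A : P) : Set ℕ := {e ∈ x | (E.lbl e).sbj = A}

end ES

/-! ## Constructions on event structures -/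

/-- Tag for the events of a left component. -/
def tagL (e : ℕ) : ℕ := Nat.pair 0 e
/-- Tag for the events of a right component. -/
def tagR (e : ℕ) : ℕ := Nat.pair 1 e
/-- Tag for the events of the copy of the second component indexed by (the code of) a
maximal configuration of the first one. -/
def tagC (k e : ℕ) : ℕ := Nat.pair 1 (Nat.pair k e)

/-- A code (injective on finite sets) of sets of naturals. -/
noncomputable def encSet (x : Set ℕ) : ℕ :=
  if h : x.Finite then h.toFinset.sum (fun n => 2 ^ n) else 0

/-- The empty event structure `ε`. -/
noncomputable def esEmpty [Nonempty P] [Nonempty M] : ES P M where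
  ev := ∅
  le _ _ := False
  conf _ _ := False
  lbl _ := Label.out Classical.ofNonempty Classical.ofNonempty Classical.ofNonempty

/-- `⟦A→B:m⟧`: two ordered events labelled `A B!m < A B?m`. -/
def esAct (a b : P) (m : M) : ES P M where
  ev := {0, 1}
  le u v := (u = 0 ∧ v = 0) ∨ (u = 0 ∧ v = 1) ∨ (u = 1 ∧ v = 1)
  conf _ _ := False
  lbl e := if e = 0 then Label.out a b m else Label.inp a b m

/-- Tensor product `E1 ⊗ E2` (componentwise disjoint union). -/
def esTensor (E1 E2 : ES P M) : ES P M where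
  ev := (tagL '' E1.ev) ∪ (tagR '' E2.ev)
  le u v := (∃ e ∈ E1.ev, ∃ f ∈ E1.ev, E1.le e f ∧ u = tagL e ∧ v = tagL f) ∨
            (∃ e ∈ E2.ev, ∃ f ∈ E2.ev, E2.le e f ∧ u = tagR e ∧ v = tagR f)
  conf u v := (∃ e ∈ E1.ev, ∃ f ∈ E1.ev, E1.conf e f ∧ u = tagL e ∧ v = tagL f) ∨
              (∃ e ∈ E2.ev, ∃ f ∈ E2.ev, E2.conf e f ∧ u = tagR e ∧ v = tagR f)
  lbl u := if (Nat.unpair u).1 = 0 then E1.lbl (Nat.unpair u).2 else E2.lbl (Nat.unpair u).2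

/-- Sum `E1 + E2`: disjoint union with all cross pairs of events in conflict. -/
def esSum (E1 E2 : ES P M) : ES P M :=
  { esTensor E1 E2 with
    conf := fun u v => (esTensor E1 E2).conf u v ∨
      (∃ e ∈ E1.ev, ∃ f ∈ E2.ev, (u = tagL e ∧ v = tagR f) ∨ (u = tagR f ∧ v = tagL e)) }

/-- Sequential composition: appends to each maximal configuration `x` of `E1` a disjoint
copy of `E2`, ordering an event of `x` below an event of the copy whenever their labels
have the same subject. -/
noncomputable def esSeq (E1 E2 : ES P M) : ES P M where
  ev := (tagL '' E1.ev) ∪ {u | ∃ x ∈ E1.MaxC, ∃ e ∈ E2.ev, u = tagC (encSet x) e}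
  le u v :=
    (∃ e ∈ E1.ev, ∃ f ∈ E1.ev, E1.le e f ∧ u = tagL e ∧ v = tagL f) ∨
    (∃ x ∈ E1.MaxC, ∃ e ∈ E2.ev, ∃ f ∈ E2.ev, E2.le e f ∧
       u = tagC (encSet x) e ∧ v = tagC (encSet x) f) ∨
    (∃ x ∈ E1.MaxC, ∃ e ∈ x, ∃ f ∈ E2.ev, (E1.lbl e).sbj = (E2.lbl f).sbj ∧
       u = tagL e ∧ v = tagC (encSet x) f)
  conf u v :=
    (∃ e ∈ E1.ev, ∃ f ∈ E1.ev, E1.conf e f ∧ u = tagL e ∧ v = tagL f) ∨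
    (∃ x ∈ E1.MaxC, ∃ e ∈ E2.ev, ∃ f ∈ E2.ev, E2.conf e f ∧
       u = tagC (encSet x) e ∧ v = tagC (encSet x) f) ∨
    (∃ x ∈ E1.MaxC, ∃ x' ∈ E1.MaxC, x ≠ x' ∧ ∃ e ∈ E2.ev, ∃ f ∈ E2.ev,
       u = tagC (encSet x) e ∧ v = tagC (encSet x') f) ∨
    (∃ x ∈ E1.MaxC, ∃ e ∈ E1.ev, (∃ e' ∈ x, E1.conf e e') ∧ ∃ f ∈ E2.ev,
       ((u = tagL e ∧ v = tagC (encSet x) f) ∨ (u = tagC (encSet x) f ∧ v = tagL e)))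
  lbl u := if (Nat.unpair u).1 = 0 then E1.lbl (Nat.unpair u).2
           else E2.lbl (Nat.unpair (Nat.unpair u).2).2

/-! ## Well-branchedness -/

/-- Labels of the minimal events of the projection `E↾A`. -/
def minLblP (E : ES P M) (A : P) : Set (Label P M) := (E.proj A).minLbl

/-- `A` is active for the branches `E1`, `E2`. -/
def active (E1 E2 : ES P M) (A : P) : Prop :=
  minLblP E1 A ≠ ∅ ∧ minLblP E2 A ≠ ∅ ∧
  Disjoint (minLblP E1 A) (minLblP E2 A) ∧
  minLblP E1 A ∪ minLblP E2 A ⊆ Lout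

/-- `B` is passive for the branches `E1`, `E2`. -/
def passive (E1 E2 : ES P M) (B : P) : Prop :=
  Disjoint (minLblP E1 B) (minLblP E2 B) ∧
  minLblP E1 B ∪ minLblP E2 B ⊆ Lin ∧
  (minLblP E1 B = ∅ ↔ minLblP E2 B = ∅)

/-- Well-branchedness: a unique active participant, all other participants passive. -/
def wb (E1 E2 : ES P M) : Prop :=
  ∃ A, active E1 E2 A ∧ (∀ A', active E1 E2 A' → A' = A) ∧
    ∀ B, B ≠ A → passive E1 E2 B

/-! ## Ground g-choreographies and their semantics -/

/-- Ground g-choreographies: `G ::= 0 | A→B:m | G;G | G|G | G+G`. -/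
inductive GC (P M : Type) where
  | nil : GC P M
  | act : P → P → M → GC P M
  | seq : GC P M → GC P M → GC P M
  | par : GC P M → GC P M → GC P M
  | cho : GC P M → GC P M → GC P M

/-- `P(G)`: the participants occurring in `G`. -/
def parts : GC P M → Set P
  | .nil => ∅
  | .act a b _ => {a, b}
  | .seq g1 g2 => parts g1 ∪ parts g2
  | .par g1 g2 => parts g1 ∪ parts g2
  | .cho g1 g2 => parts g1 ∪ parts g2

/-- The semantics `⟦G⟧`: a labelled event structure, or `none` (i.e. `⊥`) when a side
condition fails (the grammar requires `A ≠ B` in interactions; parallel requires disjoint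
label sets; choice requires well-branchedness). -/
noncomputable def gsem [Nonempty P] [Nonempty M] : GC P M → Option (ES P M)
  | .nil => some esEmpty
  | .act a b m => if a = b then none else some (esAct a b m)
  | .seq g1 g2 =>
      match gsem g1, gsem g2 with
      | some E1, some E2 => some (esSeq E1 E2)
      | _, _ => none
  | .par g1 g2 =>
      match gsem g1, gsem g2 with
      | some E1, some E2 =>
          if Disjoint E1.lblSet E2.lblSet then some (esTensor E1 E2) else none
      | _, _ => none
  | .cho g1 g2 =>
      match gsem g1, gsem g2 with
      | some E1, some E2 => if wb E1 E2 then some (esSum E1 E2) else none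
      | _, _ => none

/-! ## The typing system -/

/-- Output uniform sets of labels. -/
def outUniform (U V : Set (Label P M)) : Prop := Disjoint U V ∧ U ∪ V ⊆ Lout

/-- Input uniform sets of labels. -/
def inUniform (U V : Set (Label P M)) : Prop := Disjoint U V ∧ U ∪ V ⊆ Lin

/-- The compatibility condition `compch(φ1,φ2,Π)` of rule t-ch. -/
def compch (φ1 φ2 : Set (Label P M)) (Γ : Set P) : Prop :=
  ∃ A ∈ Γ,
    (outUniform (hat φ1 A) (hat φ2 A) ∧ hat φ1 A ≠ ∅ ∧ hat φ2 A ≠ ∅) ∧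
    (∀ A' ∈ Γ, (outUniform (hat φ1 A') (hat φ2 A') ∧ hat φ1 A' ≠ ∅ ∧ hat φ2 A' ≠ ∅) →
        A' = A) ∧
    ∀ B ∈ Γ, B ≠ A →
      inUniform (hat φ1 B) (hat φ2 B) ∧ (hat φ1 B = ∅ ↔ hat φ2 B = ∅)

/-- The typing judgement `Π ⊢ G : ⟨φ,Λ⟩`. -/
inductive Typing : Set P → GC P M → Set (Label P M) → Set (Label P M) → Prop where
  | temp : Typing ∅ GC.nil ∅ ∅
  | tint {a b : P} {m : M} (hab : a ≠ b) :
      Typing {a, b} (GC.act a b m)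
        {Label.out a b m, Label.inp a b m} {Label.out a b m, Label.inp a b m}
  | tseq {Γ1 Γ2 : Set P} {g1 g2 : GC P M} {φ1 φ2 Λ1 Λ2 : Set (Label P M)} :
      Typing Γ1 g1 φ1 Λ1 → Typing Γ2 g2 φ2 Λ2 →
      Typing (Γ1 ∪ Γ2) (GC.seq g1 g2) (φ1 ∪ lminus φ2 Γ1) (Λ2 ∪ lminus Λ1 Γ2)
  | tpar {Γ1 Γ2 : Set P} {g1 g2 : GC P M} {φ1 φ2 Λ1 Λ2 : Set (Label P M)} :
      Typing Γ1 g1 φ1 Λ1 → Typing Γ2 g2 φ2 Λ2 → Γ1 ∩ Γ2 = ∅ →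
      Typing (Γ1 ∪ Γ2) (GC.par g1 g2) (φ1 ∪ φ2) (Λ1 ∪ Λ2)
  | tch {Γ : Set P} {g1 g2 : GC P M} {φ1 φ2 Λ1 Λ2 : Set (Label P M)} :
      Typing Γ g1 φ1 Λ1 → Typing Γ g2 φ2 Λ2 → compch φ1 φ2 Γ →
      Typing Γ (GC.cho g1 g2) (φ1 ∪ φ2) (Λ1 ∪ Λ2)


/-! ## One-hole contexts and their typing (hole axiom `Γh ⊢ [·] : ⟨φh,Λh⟩`) -/

/-- g-choreography contexts with a single hole. -/
inductive Ctx (P M : Type) where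
  | hole : Ctx P M
  | seqL : Ctx P M → GC P M → Ctx P M
  | seqR : GC P M → Ctx P M → Ctx P M
  | parL : Ctx P M → GC P M → Ctx P M
  | parR : GC P M → Ctx P M → Ctx P M
  | choL : Ctx P M → GC P M → Ctx P M
  | choR : GC P M → Ctx P M → Ctx P M

/-- `C.fill g = C[g]`, the replacement of the hole of `C` by `g`. -/
def Ctx.fill : Ctx P M → GC P M → GC P M
  | .hole, g => g
  | .seqL c g2, g => GC.seq (c.fill g) g2
  | .seqR g1 c, g => GC.seq g1 (c.fill g)
  | .parL c g2, g => GC.par (c.fill g) g2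
  | .parR g1 c, g => GC.par g1 (c.fill g)
  | .choL c g2, g => GC.cho (c.fill g) g2
  | .choR g1 c, g => GC.cho g1 (c.fill g)

/-- Typing of one-hole contexts in the type system extended with the axiom
`Γh ⊢ [·] : ⟨φh,Λh⟩` for the hole. -/
inductive CTyping (Γh : Set P) (φh Λh : Set (Label P M)) :
    Set P → Ctx P M → Set (Label P M) → Set (Label P M) → Prop where
  | hole : CTyping Γh φh Λh Γh Ctx.hole φh Λh
  | seqL {Γ1 Γ2 : Set P} {c : Ctx P M} {g : GC P M} {φ1 φ2 Λ1 Λ2 : Set (Label P M)} :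
      CTyping Γh φh Λh Γ1 c φ1 Λ1 → Typing Γ2 g φ2 Λ2 →
      CTyping Γh φh Λh (Γ1 ∪ Γ2) (Ctx.seqL c g) (φ1 ∪ lminus φ2 Γ1) (Λ2 ∪ lminus Λ1 Γ2)
  | seqR {Γ1 Γ2 : Set P} {g : GC P M} {c : Ctx P M} {φ1 φ2 Λ1 Λ2 : Set (Label P M)} :
      Typing Γ1 g φ1 Λ1 → CTyping Γh φh Λh Γ2 c φ2 Λ2 →
      CTyping Γh φh Λh (Γ1 ∪ Γ2) (Ctx.seqR g c) (φ1 ∪ lminus φ2 Γ1) (Λ2 ∪ lminus Λ1 Γ2)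
  | parL {Γ1 Γ2 : Set P} {c : Ctx P M} {g : GC P M} {φ1 φ2 Λ1 Λ2 : Set (Label P M)} :
      CTyping Γh φh Λh Γ1 c φ1 Λ1 → Typing Γ2 g φ2 Λ2 → Γ1 ∩ Γ2 = ∅ →
      CTyping Γh φh Λh (Γ1 ∪ Γ2) (Ctx.parL c g) (φ1 ∪ φ2) (Λ1 ∪ Λ2)
  | parR {Γ1 Γ2 : Set P} {g : GC P M} {c : Ctx P M} {φ1 φ2 Λ1 Λ2 : Set (Label P M)} :
      Typing Γ1 g φ1 Λ1 → CTyping Γh φh Λh Γ2 c φ2 Λ2 → Γ1 ∩ Γ2 = ∅ →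
      CTyping Γh φh Λh (Γ1 ∪ Γ2) (Ctx.parR g c) (φ1 ∪ φ2) (Λ1 ∪ Λ2)
  | choL {Γ : Set P} {c : Ctx P M} {g : GC P M} {φ1 φ2 Λ1 Λ2 : Set (Label P M)} :
      CTyping Γh φh Λh Γ c φ1 Λ1 → Typing Γ g φ2 Λ2 → compch φ1 φ2 Γ →
      CTyping Γh φh Λh Γ (Ctx.choL c g) (φ1 ∪ φ2) (Λ1 ∪ Λ2)
  | choR {Γ : Set P} {g : GC P M} {c : Ctx P M} {φ1 φ2 Λ1 Λ2 : Set (Label P M)} :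
      Typing Γ g φ1 Λ1 → CTyping Γh φh Λh Γ c φ2 Λ2 → compch φ1 φ2 Γ →
      CTyping Γh φh Λh Γ (Ctx.choR g c) (φ1 ∪ φ2) (Λ1 ∪ Λ2)

/-! ## Refinable actions, t-ref, and refinement -/

/-- The three side conditions of the axiom schema t-ref for the refinable action
`A → m1…mn : B1,…,Bn`, represented by the initiator `A` and the nonempty list
`l = [(m1,B1),…,(mn,Bn)]` with pairwise distinct `Bi`. -/
def trefCond (Γ : Set P) (φ Λ : Set (Label P M)) (A : P) (l : List (M × P)) : Prop :=
  l ≠ [] ∧ (l.map Prod.snd).Nodup ∧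
  sbjSet φ = Γ ∧ sbjSet Λ = Γ ∧ sbjSet (φ ∩ Lout) = {A} ∧
  ∀ p ∈ l, ∃ C ∈ Γ, hat Λ p.2 = {Label.inp C p.2 p.1}

/-- `G ref A→m1…mn:B1,…,Bn`: the ground g-choreography `G` refines the refinable action
given by initiator `A` and list `l = [(m1,B1),…,(mn,Bn)]`. -/
def Refines [Nonempty P] [Nonempty M] (G : GC P M) (A : P) (l : List (M × P)) : Prop :=
  ∃ E : ES P M, gsem G = some E ∧
    sbjSet E.minLbl = {A} ∧
    ∀ x ∈ E.MaxC, ∀ p ∈ l, ∃ C ∈ parts G,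
      Label.inp C p.2 p.1 ∈ E.lbl '' (E.maxIn (E.projC x p.2))

/-! ## Multi-hole contexts -/

/-- g-choreography contexts with (numbered) holes. -/
inductive MCtx (P M : Type) where
  | hole : ℕ → MCtx P M
  | nil : MCtx P M
  | act : P → P → M → MCtx P M
  | seq : MCtx P M → MCtx P M → MCtx P M
  | par : MCtx P M → MCtx P M → MCtx P M
  | cho : MCtx P M → MCtx P M → MCtx P M

/-- The (indices of the) holes occurring in a multi-hole context. -/
def MCtx.holes : MCtx P M → List ℕ
  | .hole i => [i]
  | .nil => []
  | .act _ _ _ => []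
  | .seq c1 c2 => c1.holes ++ c2.holes
  | .par c1 c2 => c1.holes ++ c2.holes
  | .cho c1 c2 => c1.holes ++ c2.holes

/-- `C.fill g`: replace each hole `[·]i` by `g i`. -/
def MCtx.fill : MCtx P M → (ℕ → GC P M) → GC P M
  | .hole i, g => g i
  | .nil, _ => GC.nil
  | .act a b m, _ => GC.act a b m
  | .seq c1 c2, g => GC.seq (c1.fill g) (c2.fill g)
  | .par c1 c2, g => GC.par (c1.fill g) (c2.fill g)
  | .cho c1 c2, g => GC.cho (c1.fill g) (c2.fill g)

/-- Typing of multi-hole contexts in the extended type system, where hole `i` is typed by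
the axiom `(σ i).1 ⊢ [·]i : ⟨(σ i).2.1, (σ i).2.2⟩`. -/
inductive MTyping (σ : ℕ → Set P × Set (Label P M) × Set (Label P M)) :
    Set P → MCtx P M → Set (Label P M) → Set (Label P M) → Prop where
  | hole (i : ℕ) : MTyping σ (σ i).1 (MCtx.hole i) (σ i).2.1 (σ i).2.2
  | temp : MTyping σ ∅ MCtx.nil ∅ ∅
  | tint {a b : P} {m : M} (hab : a ≠ b) :
      MTyping σ {a, b} (MCtx.act a b m)
        {Label.out a b m, Label.inp a b m} {Label.out a b m, Label.inp a b m}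
  | tseq {Γ1 Γ2 : Set P} {c1 c2 : MCtx P M} {φ1 φ2 Λ1 Λ2 : Set (Label P M)} :
      MTyping σ Γ1 c1 φ1 Λ1 → MTyping σ Γ2 c2 φ2 Λ2 →
      MTyping σ (Γ1 ∪ Γ2) (MCtx.seq c1 c2) (φ1 ∪ lminus φ2 Γ1) (Λ2 ∪ lminus Λ1 Γ2)
  | tpar {Γ1 Γ2 : Set P} {c1 c2 : MCtx P M} {φ1 φ2 Λ1 Λ2 : Set (Label P M)} :
      MTyping σ Γ1 c1 φ1 Λ1 → MTyping σ Γ2 c2 φ2 Λ2 → Γ1 ∩ Γ2 = ∅ →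
      MTyping σ (Γ1 ∪ Γ2) (MCtx.par c1 c2) (φ1 ∪ φ2) (Λ1 ∪ Λ2)
  | tch {Γ : Set P} {c1 c2 : MCtx P M} {φ1 φ2 Λ1 Λ2 : Set (Label P M)} :
      MTyping σ Γ c1 φ1 Λ1 → MTyping σ Γ c2 φ2 Λ2 → compch φ1 φ2 Γ →
      MTyping σ Γ (MCtx.cho c1 c2) (φ1 ∪ φ2) (Λ1 ∪ Λ2)

/-! ## Auxiliary development -/

section Aux

variable {P M : Type}

/-! ### Tag lemmas -/

@[simp] lemma tagL_eq_tagL {e f : ℕ} : tagL e = tagL f ↔ e = f := by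
  simp [tagL, Nat.pair_eq_pair]

@[simp] lemma tagR_eq_tagR {e f : ℕ} : tagR e = tagR f ↔ e = f := by
  simp [tagR, Nat.pair_eq_pair]

@[simp] lemma tagC_eq_tagC {k e k' e' : ℕ} : tagC k e = tagC k' e' ↔ k = k' ∧ e = e' := by
  simp [tagC, Nat.pair_eq_pair]

@[simp] lemma tagL_ne_tagR {e f : ℕ} : tagL e ≠ tagR f := by
  simp [tagL, tagR, Nat.pair_eq_pair]

@[simp] lemma tagR_ne_tagL {e f : ℕ} : tagR e ≠ tagL f := by
  simp [tagL, tagR, Nat.pair_eq_pair]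

@[simp] lemma tagL_ne_tagC {e k f : ℕ} : tagL e ≠ tagC k f := by
  simp [tagL, tagC, Nat.pair_eq_pair]

@[simp] lemma tagC_ne_tagL {e k f : ℕ} : tagC k f ≠ tagL e := by
  simp [tagL, tagC, Nat.pair_eq_pair]

@[simp] lemma unpair_tagL (e : ℕ) : Nat.unpair (tagL e) = (0, e) := by
  simp [tagL]

@[simp] lemma unpair_tagR (e : ℕ) : Nat.unpair (tagR e) = (1, e) := by
  simp [tagR]

@[simp] lemma unpair_tagC (k e : ℕ) : Nat.unpair (tagC k e) = (1, Nat.pair k e) := by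
  simp [tagC]

lemma tagL_injective : Function.Injective tagL := fun _ _ h => tagL_eq_tagL.1 h

lemma tagR_injective : Function.Injective tagR := fun _ _ h => tagR_eq_tagR.1 h

lemma tagC_injective (k : ℕ) : Function.Injective (tagC k) :=
  fun _ _ h => (tagC_eq_tagC.1 h).2

/-! ### encSet -/

lemma encSet_inj {x y : Set ℕ} (hx : x.Finite) (hy : y.Finite)
    (h : encSet x = encSet y) : x = y := by
  rw [encSet, dif_pos hx, encSet, dif_pos hy] at h
  have : hx.toFinset = hy.toFinset := Finset.geomSum_injective (n := 2) le_rfl h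
  rw [← hx.coe_toFinset, ← hy.coe_toFinset, this]

/-! ### Generic ES lemmas -/

namespace ES

variable (E : ES P M)

lemma config_empty : E.Config ∅ := ⟨by simp, by simp, by simp⟩

variable {E}

lemma Config.subset_ev {x : Set ℕ} (h : E.Config x) : x ⊆ E.ev := h.1

lemma Config.down {x : Set ℕ} (h : E.Config x) :
    ∀ e ∈ x, ∀ f ∈ E.ev, E.le f e → f ∈ x := h.2.1

lemma Config.nconf {x : Set ℕ} (h : E.Config x) :
    ∀ e ∈ x, ∀ f ∈ x, ¬ E.conf e f := h.2.2

lemma MaxC.config {x : Set ℕ} (h : E.MaxC x) : E.Config x := h.1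

lemma MaxC.max {x : Set ℕ} (h : x ∈ E.MaxC) :
    ∀ y, E.Config y → x ⊆ y → y = x := h.2

lemma MaxC.finite {x : Set ℕ} (hfin : E.ev.Finite) (h : x ∈ E.MaxC) : x.Finite :=
  hfin.subset h.config.subset_ev

/-- Every configuration extends to a maximal one (finite case). -/
lemma exists_maxC (hfin : E.ev.Finite) {x : Set ℕ} (hx : E.Config x) :
    ∃ y ∈ E.MaxC, x ⊆ y := by
  classical
  set S : Set (Set ℕ) := {y | E.Config y ∧ x ⊆ y} with hS
  have hSfin : S.Finite := by
    apply hfin.finite_subsets.subset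
    intro y hy
    exact hy.1.subset_ev
  have hSne : S.Nonempty := ⟨x, hx, subset_rfl⟩
  obtain ⟨y, hyS, hymax⟩ := Set.Finite.exists_maximalFor Set.ncard S hSfin hSne
  refine ⟨y, ⟨hyS.1, ?_⟩, hyS.2⟩
  intro z hz hyz
  have hzS : z ∈ S := ⟨hz, hyS.2.trans hyz⟩
  have hzfin : z.Finite := hfin.subset hz.subset_ev
  have h1 : y.ncard ≤ z.ncard := Set.ncard_le_ncard hyz hzfin
  have h2 := hymax hzS h1
  exact (Set.eq_of_subset_of_ncard_le hyz h2.ge hzfin).symm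

lemma maxC_nonempty (hfin : E.ev.Finite) : E.MaxC.Nonempty := by
  obtain ⟨y, hy, -⟩ := exists_maxC hfin (E.config_empty)
  exact ⟨y, hy⟩

/-- A rank function witnessing the absence of nontrivial cycles. -/
def HasRank (E : ES P M) : Prop :=
  ∃ r : ℕ → ℕ, ∀ e ∈ E.ev, ∀ f ∈ E.ev, E.le e f → e ≠ f → r e < r f

lemma exists_maxIn (hfin : E.ev.Finite) (hrk : E.HasRank) {s : Set ℕ}
    (hs : s ⊆ E.ev) (hne : s.Nonempty) : (E.maxIn s).Nonempty := by
  obtain ⟨r, hr⟩ := hrk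
  obtain ⟨e, he, hmax⟩ := Set.Finite.exists_maximalFor r s (hfin.subset hs) hne
  refine ⟨e, he, ?_⟩
  intro f hf hef
  by_contra hne'
  have := hr e (hs he) f (hs hf) hef (fun h => hne' h.symm)
  exact absurd (hmax hf this.le) (by omega)

lemma exists_minIn (hfin : E.ev.Finite) (hrk : E.HasRank) {s : Set ℕ}
    (hs : s ⊆ E.ev) (hne : s.Nonempty) : (E.minIn s).Nonempty := by
  obtain ⟨r, hr⟩ := hrk
  obtain ⟨e, he, hmin⟩ := Set.Finite.exists_minimalFor r s (hfin.subset hs) hne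
  refine ⟨e, he, ?_⟩
  intro f hf hef
  by_contra hne'
  have := hr f (hs hf) e (hs he) hef (fun h => hne' h)
  exact absurd (hmin hf this.le) (by omega)

/-- A minimal event is minimal in its own projection. -/
lemma minEv_mem_proj_minEv {e : ℕ} (he : e ∈ E.minEv) :
    e ∈ (E.proj (E.lbl e).sbj).minEv := by
  obtain ⟨hev, hmin⟩ := he
  refine ⟨⟨hev, rfl⟩, ?_⟩
  intro f hf hfe
  exact hmin f hf.1 hfe.1

end ES

end Aux
section Aux2

variable {P M : Type}

/-! ### Label helpers -/

@[simp] lemma sbj_out (a b : P) (m : M) : (Label.out a b m).sbj = a := rfl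
@[simp] lemma sbj_inp (a b : P) (m : M) : (Label.inp a b m).sbj = b := rfl

@[simp] lemma out_mem_Lout {a b : P} {m : M} :
    (Label.out a b m) ∈ (Lout : Set (Label P M)) ↔ a ≠ b := by
  constructor
  · rintro ⟨a', b', m', hne, h⟩
    cases h; exact hne
  · intro h; exact ⟨a, b, m, h, rfl⟩

@[simp] lemma inp_mem_Lin {a b : P} {m : M} :
    (Label.inp a b m) ∈ (Lin : Set (Label P M)) ↔ a ≠ b := by
  constructor
  · rintro ⟨a', b', m', hne, h⟩
    cases h; exact hne
  · intro h; exact ⟨a, b, m, h, rfl⟩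

@[simp] lemma out_not_mem_Lin {a b : P} {m : M} :
    (Label.out a b m) ∉ (Lin : Set (Label P M)) := by
  rintro ⟨a', b', m', hne, h⟩; cases h

@[simp] lemma inp_not_mem_Lout {a b : P} {m : M} :
    (Label.inp a b m) ∉ (Lout : Set (Label P M)) := by
  rintro ⟨a', b', m', hne, h⟩; cases h

lemma hat_union (U V : Set (Label P M)) (A : P) :
    hat (U ∪ V) A = hat U A ∪ hat V A := by
  ext l; simp only [hat, Set.mem_union, Set.mem_setOf_eq]; tauto

lemma hat_lminus_of_mem {Γ : Set P} {B : P} (hB : B ∈ Γ) (φ : Set (Label P M)) :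
    hat (lminus φ Γ) B = ∅ := by
  ext l; simp only [hat, lminus, Set.mem_setOf_eq, Set.mem_empty_iff_false, iff_false]
  rintro ⟨⟨-, h⟩, rfl⟩; exact h hB

lemma hat_lminus_of_not_mem {Γ : Set P} {B : P} (hB : B ∉ Γ) (φ : Set (Label P M)) :
    hat (lminus φ Γ) B = hat φ B := by
  ext l; simp only [hat, lminus, Set.mem_setOf_eq]
  constructor
  · rintro ⟨⟨h, -⟩, h2⟩; exact ⟨h, h2⟩
  · rintro ⟨h, h2⟩; exact ⟨⟨h, h2 ▸ hB⟩, h2⟩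

lemma mem_sbjSet {L : Set (Label P M)} {B : P} :
    B ∈ sbjSet L ↔ ∃ l ∈ L, l.sbj = B := by
  simp [sbjSet]

/-! ### The invariant bundle -/

structure Good (Γ : Set P) (φ Λ : Set (Label P M)) (E : ES P M) : Prop where
  fin : E.ev.Finite
  rk : E.HasRank
  proper : ∀ e ∈ E.ev, E.lbl e ∈ Lout ∪ Lin
  sbjin : ∀ e ∈ E.ev, (E.lbl e).sbj ∈ Γ
  inpB : ∀ e ∈ E.ev, E.lbl e ∈ Lin → ∃ o ∈ E.ev, E.lbl o ∈ Lout ∧ E.le o e ∧ o ≠ e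
  cirr : ∀ e ∈ E.ev, ¬ E.conf e e
  csym : ∀ e ∈ E.ev, ∀ f ∈ E.ev, E.conf e f → E.conf f e
  cover : ∀ B ∈ Γ, ∃ e ∈ E.ev, (E.lbl e).sbj = B
  minp : ∀ B, minLblP E B = hat φ B
  maxc : ∀ x ∈ E.MaxC, ∀ B ∈ Γ, (E.lbl '' (E.maxIn (E.projC x B))).Nonempty ∧
           E.lbl '' (E.maxIn (E.projC x B)) ⊆ hat Λ B

lemma Good.proj_ev_empty {Γ : Set P} {φ Λ : Set (Label P M)} {E : ES P M}
    (hG : Good Γ φ Λ E) {B : P} (hB : B ∉ Γ) : (E.proj B).ev = ∅ := by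
  ext e
  simp only [ES.proj, Set.mem_setOf_eq, Set.mem_empty_iff_false, iff_false]
  rintro ⟨he, hs⟩
  exact hB (hs ▸ hG.sbjin e he)

lemma Good.minLblP_empty {Γ : Set P} {φ Λ : Set (Label P M)} {E : ES P M}
    (hG : Good Γ φ Λ E) {B : P} (hB : B ∉ Γ) : minLblP E B = ∅ := by
  have h := hG.proj_ev_empty hB
  ext l
  simp only [minLblP, ES.minLbl, ES.minEv, ES.minIn, Set.mem_image,
    Set.mem_empty_iff_false, iff_false]
  rintro ⟨e, ⟨he, -⟩, -⟩
  rw [h] at he; exact he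

lemma Good.hat_phi_empty {Γ : Set P} {φ Λ : Set (Label P M)} {E : ES P M}
    (hG : Good Γ φ Λ E) {B : P} (hB : B ∉ Γ) : hat φ B = ∅ :=
  (hG.minp B).symm.trans (hG.minLblP_empty hB)

/-! ### Good for esEmpty and esAct -/

lemma good_empty [Nonempty P] [Nonempty M] :
    Good (∅ : Set P) (∅ : Set (Label P M)) ∅ esEmpty := by
  constructor
  · simp [esEmpty]
  · exact ⟨id, by simp [esEmpty]⟩
  · simp [esEmpty]
  · simp [esEmpty]
  · simp [esEmpty]
  · simp [esEmpty]
  · simp [esEmpty]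
  · intro B hB
    exact absurd hB (Set.notMem_empty B)
  · intro B
    ext l
    simp only [minLblP, ES.minLbl, ES.minEv, ES.minIn, ES.proj, esEmpty, hat,
      Set.mem_image, Set.mem_setOf_eq, Set.mem_empty_iff_false, false_and, and_false]
    simp
  · intro x hx B hB
    exact absurd hB (Set.notMem_empty B)

lemma maxC_act {a b : P} {m : M} {x : Set ℕ} (hx : x ∈ (esAct a b m).MaxC) :
    x = {0, 1} := by
  have hcfg : (esAct a b m).Config {0, 1} := by
    refine ⟨subset_rfl, ?_, ?_⟩
    · intro e he f hf hle
      exact hf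
    · intro e he f hf h
      exact h
  exact (hx.2 {0, 1} hcfg hx.1.subset_ev).symm

lemma good_act {a b : P} {m : M} (hab : a ≠ b) :
    Good {a, b} {Label.out a b m, Label.inp a b m}
      {Label.out a b m, Label.inp a b m} (esAct a b m) := by
  have hlbl0 : (esAct a b m).lbl 0 = Label.out a b m := by simp [esAct]
  have hlbl1 : (esAct a b m).lbl 1 = Label.inp a b m := by simp [esAct]
  have hproj : ∀ C : P, ((esAct a b m).proj C).ev =
      {e ∈ ({0, 1} : Set ℕ) | ((esAct a b m).lbl e).sbj = C} := fun C => rfl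
  have hev0 : ∀ B : P, B = a → ((esAct a b m).proj B).ev = {0} := by
    intro B hB
    rw [hproj]
    ext e
    simp only [Set.mem_setOf_eq, Set.mem_singleton_iff]
    constructor
    · rintro ⟨(rfl | rfl), hs⟩
      · rfl
      · rw [hlbl1, sbj_inp] at hs; rw [hB] at hs; exact absurd hs.symm hab
    · rintro rfl; exact ⟨Or.inl rfl, by rw [hlbl0, sbj_out, hB]⟩
  have hev1 : ∀ B : P, B = b → ((esAct a b m).proj B).ev = {1} := by
    intro B hB
    rw [hproj]
    ext e
    simp only [Set.mem_setOf_eq, Set.mem_singleton_iff]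
    constructor
    · rintro ⟨(rfl | rfl), hs⟩
      · rw [hlbl0, sbj_out, hB] at hs; exact absurd hs hab
      · rfl
    · rintro rfl; exact ⟨Or.inr rfl, by rw [hlbl1, sbj_inp, hB]⟩
  have hminsing : ∀ s : Set ℕ, (∀ e ∈ s, ∀ f ∈ s, f = e) →
      (esAct a b m).minIn s = s := by
    intro s hs
    ext e
    simp only [ES.minIn, Set.mem_setOf_eq]
    constructor
    · rintro ⟨h, -⟩; exact h
    · intro he; exact ⟨he, fun f hf _ => hs e he f hf⟩
  have hmaxsing : ∀ s : Set ℕ, (∀ e ∈ s, ∀ f ∈ s, f = e) →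
      (esAct a b m).maxIn s = s := by
    intro s hs
    ext e
    simp only [ES.maxIn, Set.mem_setOf_eq]
    constructor
    · rintro ⟨h, -⟩; exact h
    · intro he; exact ⟨he, fun f hf _ => hs e he f hf⟩
  constructor
  · exact (Set.finite_singleton 1).insert 0
  · refine ⟨id, ?_⟩
    rintro e he f hf (⟨rfl, rfl⟩ | ⟨rfl, rfl⟩ | ⟨rfl, rfl⟩) hne
    · exact absurd rfl hne
    · exact Nat.zero_lt_one
    · exact absurd rfl hne
  · rintro e (rfl | rfl)
    · rw [hlbl0]; exact Or.inl (out_mem_Lout.2 hab)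
    · rw [hlbl1]; exact Or.inr (inp_mem_Lin.2 hab)
  · rintro e (rfl | rfl)
    · rw [hlbl0, sbj_out]; exact Or.inl rfl
    · rw [hlbl1, sbj_inp]; exact Or.inr rfl
  · rintro e (rfl | rfl) hin
    · rw [hlbl0] at hin; exact absurd hin out_not_mem_Lin
    · refine ⟨0, Or.inl rfl, ?_, ?_, ?_⟩
      · rw [hlbl0]; exact out_mem_Lout.2 hab
      · right; left; exact ⟨rfl, rfl⟩
      · simp
  · rintro e he h; exact h
  · rintro e he f hf h; exact h
  · rintro B (hBa | hBb)
    · exact ⟨0, Or.inl rfl, by rw [hlbl0, sbj_out]; exact hBa.symm⟩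
    · exact ⟨1, Or.inr rfl, by rw [hlbl1, sbj_inp]; exact hBb.symm⟩
  · intro B
    by_cases hBa : B = a
    · have hmin : ((esAct a b m).proj B).minEv = {0} := by
        unfold ES.minEv
        rw [hev0 B hBa]
        ext e
        simp only [ES.minIn, Set.mem_setOf_eq, Set.mem_singleton_iff]
        constructor
        · rintro ⟨h, -⟩; exact h
        · rintro rfl; exact ⟨rfl, by rintro f rfl -; rfl⟩
      rw [minLblP, ES.minLbl, hmin]
      ext l
      simp only [Set.image_singleton, Set.mem_singleton_iff, hat, Set.mem_setOf_eq]
      show l = (esAct a b m).lbl 0 ↔ _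
      rw [hlbl0]
      constructor
      · rintro rfl; exact ⟨Or.inl rfl, by rw [sbj_out, hBa]⟩
      · rintro ⟨(rfl | rfl), hs⟩
        · rfl
        · rw [sbj_inp, hBa] at hs; exact absurd hs.symm hab
    · by_cases hBb : B = b
      · have hmin : ((esAct a b m).proj B).minEv = {1} := by
          unfold ES.minEv
          rw [hev1 B hBb]
          ext e
          simp only [ES.minIn, Set.mem_setOf_eq, Set.mem_singleton_iff]
          constructor
          · rintro ⟨h, -⟩; exact h
          · rintro rfl; exact ⟨rfl, by rintro f rfl -; rfl⟩
        rw [minLblP, ES.minLbl, hmin]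
        ext l
        simp only [Set.image_singleton, Set.mem_singleton_iff, hat, Set.mem_setOf_eq]
        show l = (esAct a b m).lbl 1 ↔ _
        rw [hlbl1]
        constructor
        · rintro rfl; exact ⟨Or.inr rfl, by rw [sbj_inp, hBb]⟩
        · rintro ⟨(rfl | rfl), hs⟩
          · rw [sbj_out, hBb] at hs; exact absurd hs hab
          · rfl
      · have hev : ((esAct a b m).proj B).ev = ∅ := by
          rw [hproj]
          ext e
          simp only [Set.mem_setOf_eq, Set.mem_empty_iff_false, iff_false]
          rintro ⟨(rfl | rfl), hs⟩
          · rw [hlbl0, sbj_out] at hs; exact hBa hs.symm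
          · rw [hlbl1, sbj_inp] at hs; exact hBb hs.symm
        have h1 : minLblP (esAct a b m) B = ∅ := by
          ext l
          simp only [minLblP, ES.minLbl, ES.minEv, ES.minIn, Set.mem_image,
            Set.mem_empty_iff_false, iff_false]
          rintro ⟨e, ⟨he, -⟩, -⟩
          rw [hev] at he; exact he
        rw [h1]
        ext l
        simp only [hat, Set.mem_setOf_eq, Set.mem_empty_iff_false, false_iff, not_and]
        rintro (rfl | rfl) hs
        · rw [sbj_out] at hs; exact hBa hs.symm
        · rw [sbj_inp] at hs; exact hBb hs.symm
  · intro x hx B hB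
    have hx' := maxC_act hx
    subst hx'
    have h01 : ¬ ((1 : ℕ) = 0) := by simp
    rcases hB with hBa | hBb
    · have hpc : (esAct a b m).projC {0, 1} B = {0} := by
        ext e
        simp only [ES.projC, Set.mem_setOf_eq, Set.mem_singleton_iff]
        constructor
        · rintro ⟨(rfl | rfl), hs⟩
          · rfl
          · rw [hlbl1, sbj_inp] at hs; rw [hBa] at hs; exact absurd hs.symm hab
        · rintro rfl; exact ⟨Or.inl rfl, by rw [hlbl0, sbj_out, hBa]⟩
      rw [hpc, hmaxsing {0} (by rintro e rfl f rfl; rfl)]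
      constructor
      · exact ⟨_, 0, rfl, rfl⟩
      · rintro l ⟨e, rfl, rfl⟩
        rw [hlbl0]; exact ⟨Or.inl rfl, by rw [sbj_out, hBa]⟩
    · have hpc : (esAct a b m).projC {0, 1} B = {1} := by
        ext e
        simp only [ES.projC, Set.mem_setOf_eq, Set.mem_singleton_iff]
        constructor
        · rintro ⟨(rfl | rfl), hs⟩
          · rw [hlbl0, sbj_out, hBb] at hs; exact absurd hs hab
          · rfl
        · rintro rfl; exact ⟨Or.inr rfl, by rw [hlbl1, sbj_inp, hBb]⟩
      rw [hpc, hmaxsing {1} (by rintro e rfl f rfl; rfl)]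
      constructor
      · exact ⟨_, 1, rfl, rfl⟩
      · rintro l ⟨e, rfl, rfl⟩
        rw [hlbl1]; exact ⟨Or.inr rfl, by rw [sbj_inp, hBb]⟩

end Aux2
section Aux3

variable {P M : Type} {E1 E2 : ES P M}

/-! ### Tensor and sum basics -/

lemma tensor_ev_mem {u : ℕ} : u ∈ (esTensor E1 E2).ev ↔
    (∃ e ∈ E1.ev, u = tagL e) ∨ (∃ e ∈ E2.ev, u = tagR e) := by
  simp only [esTensor, Set.mem_union, Set.mem_image]
  constructor
  · rintro (⟨e, he, rfl⟩ | ⟨e, he, rfl⟩)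
    · exact Or.inl ⟨e, he, rfl⟩
    · exact Or.inr ⟨e, he, rfl⟩
  · rintro (⟨e, he, rfl⟩ | ⟨e, he, rfl⟩)
    · exact Or.inl ⟨e, he, rfl⟩
    · exact Or.inr ⟨e, he, rfl⟩

@[simp] lemma tensor_lbl_tagL (e : ℕ) : (esTensor E1 E2).lbl (tagL e) = E1.lbl e := by
  simp [esTensor]

@[simp] lemma tensor_lbl_tagR (e : ℕ) : (esTensor E1 E2).lbl (tagR e) = E2.lbl e := by
  simp [esTensor, tagR]

lemma sum_ev : (esSum E1 E2).ev = (esTensor E1 E2).ev := rfl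
lemma sum_le : (esSum E1 E2).le = (esTensor E1 E2).le := rfl
lemma sum_lbl : (esSum E1 E2).lbl = (esTensor E1 E2).lbl := rfl
lemma sum_maxIn : (esSum E1 E2).maxIn = (esTensor E1 E2).maxIn := rfl
lemma sum_projC : (esSum E1 E2).projC = (esTensor E1 E2).projC := rfl

/-! ### Configurations of tensor and sum -/

lemma tensor_config_L {x : Set ℕ} (hx : (esTensor E1 E2).Config x) :
    E1.Config (tagL ⁻¹' x) := by
  obtain ⟨hsub, hdown, hconf⟩ := hx
  have hmemL : ∀ e, tagL e ∈ x → e ∈ E1.ev := by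
    intro e he
    rcases tensor_ev_mem.1 (hsub he) with ⟨e', he', heq⟩ | ⟨e', he', heq⟩
    · obtain rfl := tagL_eq_tagL.1 heq; exact he'
    · exact absurd heq tagL_ne_tagR
  refine ⟨fun e he => hmemL e he, ?_, ?_⟩
  · intro e he f hf hle
    have : (esTensor E1 E2).le (tagL f) (tagL e) :=
      Or.inl ⟨f, hf, e, hmemL e he, hle, rfl, rfl⟩
    exact hdown (tagL e) he (tagL f) (Or.inl ⟨f, hf, rfl⟩) this
  · intro e he f hf hc
    exact hconf (tagL e) he (tagL f) hf
      (Or.inl ⟨e, hmemL e he, f, hmemL f hf, hc, rfl, rfl⟩)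

lemma tensor_config_R {x : Set ℕ} (hx : (esTensor E1 E2).Config x) :
    E2.Config (tagR ⁻¹' x) := by
  obtain ⟨hsub, hdown, hconf⟩ := hx
  have hmemR : ∀ e, tagR e ∈ x → e ∈ E2.ev := by
    intro e he
    rcases tensor_ev_mem.1 (hsub he) with ⟨e', he', heq⟩ | ⟨e', he', heq⟩
    · exact absurd heq tagR_ne_tagL
    · obtain rfl := tagR_eq_tagR.1 heq; exact he'
  refine ⟨fun e he => hmemR e he, ?_, ?_⟩
  · intro e he f hf hle
    have : (esTensor E1 E2).le (tagR f) (tagR e) :=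
      Or.inr ⟨f, hf, e, hmemR e he, hle, rfl, rfl⟩
    exact hdown (tagR e) he (tagR f) (Or.inr ⟨f, hf, rfl⟩) this
  · intro e he f hf hc
    exact hconf (tagR e) he (tagR f) hf
      (Or.inr ⟨e, hmemR e he, f, hmemR f hf, hc, rfl, rfl⟩)

lemma sum_config_L {x : Set ℕ} (hx : (esSum E1 E2).Config x) :
    E1.Config (tagL ⁻¹' x) := by
  obtain ⟨hsub, hdown, hconf⟩ := hx
  have hmemL : ∀ e, tagL e ∈ x → e ∈ E1.ev := by
    intro e he
    rcases tensor_ev_mem.1 (hsub he) with ⟨e', he', heq⟩ | ⟨e', he', heq⟩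
    · obtain rfl := tagL_eq_tagL.1 heq; exact he'
    · exact absurd heq tagL_ne_tagR
  refine ⟨fun e he => hmemL e he, ?_, ?_⟩
  · intro e he f hf hle
    have : (esSum E1 E2).le (tagL f) (tagL e) :=
      Or.inl ⟨f, hf, e, hmemL e he, hle, rfl, rfl⟩
    exact hdown (tagL e) he (tagL f) (Or.inl ⟨f, hf, rfl⟩) this
  · intro e he f hf hc
    exact hconf (tagL e) he (tagL f) hf
      (Or.inl (Or.inl ⟨e, hmemL e he, f, hmemL f hf, hc, rfl, rfl⟩))

lemma sum_config_R {x : Set ℕ} (hx : (esSum E1 E2).Config x) :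
    E2.Config (tagR ⁻¹' x) := by
  obtain ⟨hsub, hdown, hconf⟩ := hx
  have hmemR : ∀ e, tagR e ∈ x → e ∈ E2.ev := by
    intro e he
    rcases tensor_ev_mem.1 (hsub he) with ⟨e', he', heq⟩ | ⟨e', he', heq⟩
    · exact absurd heq tagR_ne_tagL
    · obtain rfl := tagR_eq_tagR.1 heq; exact he'
  refine ⟨fun e he => hmemR e he, ?_, ?_⟩
  · intro e he f hf hle
    have : (esSum E1 E2).le (tagR f) (tagR e) :=
      Or.inr ⟨f, hf, e, hmemR e he, hle, rfl, rfl⟩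
    exact hdown (tagR e) he (tagR f) (Or.inr ⟨f, hf, rfl⟩) this
  · intro e he f hf hc
    exact hconf (tagR e) he (tagR f) hf
      (Or.inl (Or.inr ⟨e, hmemR e he, f, hmemR f hf, hc, rfl, rfl⟩))

/-! ### Maximal configurations of the tensor -/

lemma maxC_tensor {x : Set ℕ} (hx : x ∈ (esTensor E1 E2).MaxC) :
    ∃ y ∈ E1.MaxC, ∃ z ∈ E2.MaxC, x = tagL '' y ∪ tagR '' z := by
  obtain ⟨hcfg, hmax⟩ := hx
  set y := tagL ⁻¹' x with hy
  set z := tagR ⁻¹' x with hz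
  have hdec : x = tagL '' y ∪ tagR '' z := by
    ext u
    constructor
    · intro hu
      rcases tensor_ev_mem.1 (hcfg.subset_ev hu) with ⟨e, he, rfl⟩ | ⟨e, he, rfl⟩
      · exact Or.inl ⟨e, hu, rfl⟩
      · exact Or.inr ⟨e, hu, rfl⟩
    · rintro (⟨e, he, rfl⟩ | ⟨e, he, rfl⟩) <;> exact he
  have hycfg : E1.Config y := tensor_config_L hcfg
  have hzcfg : E2.Config z := tensor_config_R hcfg
  refine ⟨y, ⟨hycfg, ?_⟩, z, ⟨hzcfg, ?_⟩, hdec⟩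
  · -- y maximal
    intro y' hy' hyy'
    have hcfg' : (esTensor E1 E2).Config (tagL '' y' ∪ tagR '' z) := by
      refine ⟨?_, ?_, ?_⟩
      · rintro u (⟨e, he, rfl⟩ | ⟨e, he, rfl⟩)
        · exact Or.inl ⟨e, hy'.subset_ev he, rfl⟩
        · exact Or.inr ⟨e, hzcfg.subset_ev he, rfl⟩
      · rintro u hu v hv hle
        rcases hle with ⟨e, he, f, hf, hlef, rfl, rfl⟩ | ⟨e, he, f, hf, hlef, rfl, rfl⟩
        · -- v = tagL e ≤ u = tagL f
          rcases hu with ⟨f', hf', heq⟩ | ⟨f', hf', heq⟩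
          · obtain rfl := tagL_eq_tagL.1 heq
            exact Or.inl ⟨e, hy'.down f' hf' e he hlef, rfl⟩
          · exact absurd heq.symm tagL_ne_tagR
        · rcases hu with ⟨f', hf', heq⟩ | ⟨f', hf', heq⟩
          · exact absurd heq tagL_ne_tagR
          · obtain rfl := tagR_eq_tagR.1 heq
            exact Or.inr ⟨e, hzcfg.down f' hf' e he hlef, rfl⟩
      · rintro u hu v hv hc
        rcases hc with ⟨e, he, f, hf, hcf, rfl, rfl⟩ | ⟨e, he, f, hf, hcf, rfl, rfl⟩
        · rcases hu with ⟨e', he', heq⟩ | ⟨e', he', heq⟩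
          · obtain rfl := tagL_eq_tagL.1 heq
            rcases hv with ⟨f', hf', heq'⟩ | ⟨f', hf', heq'⟩
            · obtain rfl := tagL_eq_tagL.1 heq'
              exact hy'.nconf e' he' f' hf' hcf
            · exact absurd heq'.symm tagL_ne_tagR
          · exact absurd heq.symm tagL_ne_tagR
        · rcases hu with ⟨e', he', heq⟩ | ⟨e', he', heq⟩
          · exact absurd heq tagL_ne_tagR
          · obtain rfl := tagR_eq_tagR.1 heq
            rcases hv with ⟨f', hf', heq'⟩ | ⟨f', hf', heq'⟩
            · exact absurd heq' tagL_ne_tagR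
            · obtain rfl := tagR_eq_tagR.1 heq'
              exact hzcfg.nconf e' he' f' hf' hcf
    have hsub : x ⊆ tagL '' y' ∪ tagR '' z := by
      rw [hdec]
      apply Set.union_subset_union_left
      exact Set.image_mono  hyy'
    have := hmax _ hcfg' hsub
    ext e
    constructor
    · intro he
      have hmem : tagL e ∈ tagL '' y' ∪ tagR '' z := Or.inl ⟨e, he, rfl⟩
      rw [hmax _ hcfg' hsub] at hmem
      exact hmem
    · exact fun he => hyy' he
  · -- z maximal (symmetric)
    intro z' hz' hzz'
    have hcfg' : (esTensor E1 E2).Config (tagL '' y ∪ tagR '' z') := by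
      refine ⟨?_, ?_, ?_⟩
      · rintro u (⟨e, he, rfl⟩ | ⟨e, he, rfl⟩)
        · exact Or.inl ⟨e, hycfg.subset_ev he, rfl⟩
        · exact Or.inr ⟨e, hz'.subset_ev he, rfl⟩
      · rintro u hu v hv hle
        rcases hle with ⟨e, he, f, hf, hlef, rfl, rfl⟩ | ⟨e, he, f, hf, hlef, rfl, rfl⟩
        · rcases hu with ⟨f', hf', heq⟩ | ⟨f', hf', heq⟩
          · obtain rfl := tagL_eq_tagL.1 heq
            exact Or.inl ⟨e, hycfg.down f' hf' e he hlef, rfl⟩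
          · exact absurd heq.symm tagL_ne_tagR
        · rcases hu with ⟨f', hf', heq⟩ | ⟨f', hf', heq⟩
          · exact absurd heq tagL_ne_tagR
          · obtain rfl := tagR_eq_tagR.1 heq
            exact Or.inr ⟨e, hz'.down f' hf' e he hlef, rfl⟩
      · rintro u hu v hv hc
        rcases hc with ⟨e, he, f, hf, hcf, rfl, rfl⟩ | ⟨e, he, f, hf, hcf, rfl, rfl⟩
        · rcases hu with ⟨e', he', heq⟩ | ⟨e', he', heq⟩
          · obtain rfl := tagL_eq_tagL.1 heq
            rcases hv with ⟨f', hf', heq'⟩ | ⟨f', hf', heq'⟩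
            · obtain rfl := tagL_eq_tagL.1 heq'
              exact hycfg.nconf e' he' f' hf' hcf
            · exact absurd heq'.symm tagL_ne_tagR
          · exact absurd heq.symm tagL_ne_tagR
        · rcases hu with ⟨e', he', heq⟩ | ⟨e', he', heq⟩
          · exact absurd heq tagL_ne_tagR
          · obtain rfl := tagR_eq_tagR.1 heq
            rcases hv with ⟨f', hf', heq'⟩ | ⟨f', hf', heq'⟩
            · exact absurd heq' tagL_ne_tagR
            · obtain rfl := tagR_eq_tagR.1 heq'
              exact hz'.nconf e' he' f' hf' hcf
    have hsub : x ⊆ tagL '' y ∪ tagR '' z' := by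
      rw [hdec]
      apply Set.union_subset_union_right
      exact Set.image_mono  hzz'
    have heq := hmax _ hcfg' hsub
    ext e
    constructor
    · intro he
      have hmem : tagR e ∈ tagL '' y ∪ tagR '' z' := Or.inr ⟨e, he, rfl⟩
      rw [heq] at hmem
      exact hmem
    · exact fun he => hzz' he

end Aux3
section Aux4

variable {P M : Type} {E1 E2 : ES P M}

lemma tensor_proj_minEv (B : P) : ((esTensor E1 E2).proj B).minEv =
    tagL '' (E1.proj B).minEv ∪ tagR '' (E2.proj B).minEv := by
  ext u
  constructor
  · rintro ⟨⟨huev, husbj⟩, humin⟩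
    rcases tensor_ev_mem.1 huev with ⟨e, he, rfl⟩ | ⟨e, he, rfl⟩
    · rw [tensor_lbl_tagL] at husbj
      refine Or.inl ⟨e, ⟨⟨he, husbj⟩, ?_⟩, rfl⟩
      intro f hf hfe
      have hv : tagL f ∈ ((esTensor E1 E2).proj B).ev := by
        refine ⟨tensor_ev_mem.2 (Or.inl ⟨f, hf.1, rfl⟩), ?_⟩
        rw [tensor_lbl_tagL]; exact hf.2
      have hle : ((esTensor E1 E2).proj B).le (tagL f) (tagL e) := by
        refine ⟨Or.inl ⟨f, hf.1, e, he, hfe.1, rfl, rfl⟩, ⟨hv.1, hv.2⟩, huev,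
          by rw [tensor_lbl_tagL]; exact husbj⟩
      exact tagL_eq_tagL.1 (humin (tagL f) hv hle)
    · rw [tensor_lbl_tagR] at husbj
      refine Or.inr ⟨e, ⟨⟨he, husbj⟩, ?_⟩, rfl⟩
      intro f hf hfe
      have hv : tagR f ∈ ((esTensor E1 E2).proj B).ev := by
        refine ⟨tensor_ev_mem.2 (Or.inr ⟨f, hf.1, rfl⟩), ?_⟩
        rw [tensor_lbl_tagR]; exact hf.2
      have hle : ((esTensor E1 E2).proj B).le (tagR f) (tagR e) := by
        refine ⟨Or.inr ⟨f, hf.1, e, he, hfe.1, rfl, rfl⟩, ⟨hv.1, hv.2⟩, huev,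
          by rw [tensor_lbl_tagR]; exact husbj⟩
      exact tagR_eq_tagR.1 (humin (tagR f) hv hle)
  · rintro (⟨e, ⟨⟨he, hs⟩, hmin⟩, rfl⟩ | ⟨e, ⟨⟨he, hs⟩, hmin⟩, rfl⟩)
    · have huev : tagL e ∈ ((esTensor E1 E2).proj B).ev :=
        ⟨tensor_ev_mem.2 (Or.inl ⟨e, he, rfl⟩), by rw [tensor_lbl_tagL]; exact hs⟩
      refine ⟨huev, ?_⟩
      rintro v ⟨hvev, hvsbj⟩ ⟨hvle, -, -⟩
      rcases hvle with ⟨e', he', f', hf', hlef, rfl, heq⟩ | ⟨e', he', f', hf', hlef, rfl, heq⟩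
      · obtain rfl := tagL_eq_tagL.1 heq
        rw [tensor_lbl_tagL] at hvsbj
        have := hmin e' ⟨he', hvsbj⟩ ⟨hlef, ⟨he', hvsbj⟩, he, hs⟩
        rw [this]
      · exact absurd heq tagL_ne_tagR
    · have huev : tagR e ∈ ((esTensor E1 E2).proj B).ev :=
        ⟨tensor_ev_mem.2 (Or.inr ⟨e, he, rfl⟩), by rw [tensor_lbl_tagR]; exact hs⟩
      refine ⟨huev, ?_⟩
      rintro v ⟨hvev, hvsbj⟩ ⟨hvle, -, -⟩
      rcases hvle with ⟨e', he', f', hf', hlef, rfl, heq⟩ | ⟨e', he', f', hf', hlef, rfl, heq⟩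
      · exact absurd heq tagR_ne_tagL
      · obtain rfl := tagR_eq_tagR.1 heq
        rw [tensor_lbl_tagR] at hvsbj
        have := hmin e' ⟨he', hvsbj⟩ ⟨hlef, ⟨he', hvsbj⟩, he, hs⟩
        rw [this]

lemma minLblP_tensor (B : P) :
    minLblP (esTensor E1 E2) B = minLblP E1 B ∪ minLblP E2 B := by
  rw [minLblP, ES.minLbl, tensor_proj_minEv, Set.image_union]
  congr 1
  · ext l
    simp only [Set.mem_image]
    constructor
    · rintro ⟨u, ⟨e, he, rfl⟩, rfl⟩
      exact ⟨e, he, (tensor_lbl_tagL e).symm⟩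
    · rintro ⟨e, he, rfl⟩
      exact ⟨tagL e, ⟨e, he, rfl⟩, tensor_lbl_tagL e⟩
  · ext l
    simp only [Set.mem_image]
    constructor
    · rintro ⟨u, ⟨e, he, rfl⟩, rfl⟩
      exact ⟨e, he, (tensor_lbl_tagR e).symm⟩
    · rintro ⟨e, he, rfl⟩
      exact ⟨tagR e, ⟨e, he, rfl⟩, tensor_lbl_tagR e⟩

lemma minLblP_sum (B : P) :
    minLblP (esSum E1 E2) B = minLblP E1 B ∪ minLblP E2 B := by
  have h : minLblP (esSum E1 E2) B = minLblP (esTensor E1 E2) B := rfl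
  rw [h, minLblP_tensor]

lemma tensor_maxIn_tagL {s : Set ℕ} (hs : s ⊆ E1.ev) :
    (esTensor E1 E2).maxIn (tagL '' s) = tagL '' (E1.maxIn s) := by
  ext u
  constructor
  · rintro ⟨⟨e, he, rfl⟩, hmax⟩
    refine ⟨e, ⟨he, ?_⟩, rfl⟩
    intro f hf hef
    have := hmax (tagL f) ⟨f, hf, rfl⟩ (Or.inl ⟨e, hs he, f, hs hf, hef, rfl, rfl⟩)
    exact tagL_eq_tagL.1 this
  · rintro ⟨e, ⟨he, hmax⟩, rfl⟩
    refine ⟨⟨e, he, rfl⟩, ?_⟩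
    rintro v ⟨f, hf, rfl⟩ hle
    rcases hle with ⟨e', he', f', hf', hlef, heq, heq'⟩ | ⟨e', he', f', hf', hlef, heq, heq'⟩
    · obtain rfl := tagL_eq_tagL.1 heq
      obtain rfl := tagL_eq_tagL.1 heq'
      rw [hmax f hf hlef]
    · exact absurd heq tagL_ne_tagR
  
lemma tensor_maxIn_tagR {s : Set ℕ} (hs : s ⊆ E2.ev) :
    (esTensor E1 E2).maxIn (tagR '' s) = tagR '' (E2.maxIn s) := by
  ext u
  constructor
  · rintro ⟨⟨e, he, rfl⟩, hmax⟩
    refine ⟨e, ⟨he, ?_⟩, rfl⟩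
    intro f hf hef
    have := hmax (tagR f) ⟨f, hf, rfl⟩ (Or.inr ⟨e, hs he, f, hs hf, hef, rfl, rfl⟩)
    exact tagR_eq_tagR.1 this
  · rintro ⟨e, ⟨he, hmax⟩, rfl⟩
    refine ⟨⟨e, he, rfl⟩, ?_⟩
    rintro v ⟨f, hf, rfl⟩ hle
    rcases hle with ⟨e', he', f', hf', hlef, heq, heq'⟩ | ⟨e', he', f', hf', hlef, heq, heq'⟩
    · exact absurd heq tagR_ne_tagL
    · obtain rfl := tagR_eq_tagR.1 heq
      obtain rfl := tagR_eq_tagR.1 heq'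
      rw [hmax f hf hlef]

lemma good_tensor {Γ1 Γ2 : Set P} {φ1 φ2 Λ1 Λ2 : Set (Label P M)}
    (h1 : Good Γ1 φ1 Λ1 E1) (h2 : Good Γ2 φ2 Λ2 E2) (hdisj : Γ1 ∩ Γ2 = ∅) :
    Good (Γ1 ∪ Γ2) (φ1 ∪ φ2) (Λ1 ∪ Λ2) (esTensor E1 E2) := by
  have hd : ∀ B, B ∈ Γ1 → B ∈ Γ2 → False := by
    intro B hB1 hB2
    have : B ∈ Γ1 ∩ Γ2 := ⟨hB1, hB2⟩
    rw [hdisj] at this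
    exact this
  constructor
  · exact (h1.fin.image tagL).union (h2.fin.image tagR)
  · obtain ⟨r1, hr1⟩ := h1.rk
    obtain ⟨r2, hr2⟩ := h2.rk
    refine ⟨fun u => if (Nat.unpair u).1 = 0 then r1 (Nat.unpair u).2
      else r2 (Nat.unpair u).2, ?_⟩
    rintro u hu v hv (⟨e, he, f, hf, hlef, rfl, rfl⟩ | ⟨e, he, f, hf, hlef, rfl, rfl⟩) hne
    · simp only [unpair_tagL, if_pos rfl]
      exact hr1 e he f hf hlef (fun h => hne (by rw [h]))
    · simp only [unpair_tagR]
      norm_num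
      exact hr2 e he f hf hlef (fun h => hne (by rw [h]))
  · intro e he
    rcases tensor_ev_mem.1 he with ⟨e', he', rfl⟩ | ⟨e', he', rfl⟩
    · rw [tensor_lbl_tagL]; exact h1.proper e' he'
    · rw [tensor_lbl_tagR]; exact h2.proper e' he'
  · intro e he
    rcases tensor_ev_mem.1 he with ⟨e', he', rfl⟩ | ⟨e', he', rfl⟩
    · rw [tensor_lbl_tagL]; exact Or.inl (h1.sbjin e' he')
    · rw [tensor_lbl_tagR]; exact Or.inr (h2.sbjin e' he')
  · intro e he hin
    rcases tensor_ev_mem.1 he with ⟨e', he', rfl⟩ | ⟨e', he', rfl⟩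
    · rw [tensor_lbl_tagL] at hin
      obtain ⟨o, ho, hout, hle, hne⟩ := h1.inpB e' he' hin
      refine ⟨tagL o, tensor_ev_mem.2 (Or.inl ⟨o, ho, rfl⟩), ?_, ?_, ?_⟩
      · rw [tensor_lbl_tagL]; exact hout
      · exact Or.inl ⟨o, ho, e', he', hle, rfl, rfl⟩
      · simpa using hne
    · rw [tensor_lbl_tagR] at hin
      obtain ⟨o, ho, hout, hle, hne⟩ := h2.inpB e' he' hin
      refine ⟨tagR o, tensor_ev_mem.2 (Or.inr ⟨o, ho, rfl⟩), ?_, ?_, ?_⟩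
      · rw [tensor_lbl_tagR]; exact hout
      · exact Or.inr ⟨o, ho, e', he', hle, rfl, rfl⟩
      · simpa using hne
  · rintro e he (⟨e', he', f', hf', hc, heq, heq'⟩ | ⟨e', he', f', hf', hc, heq, heq'⟩)
    · obtain rfl := tagL_injective (heq.symm.trans heq')
      obtain rfl : e = tagL e' := heq
      exact h1.cirr e' he' hc
    · obtain rfl := tagR_injective (heq.symm.trans heq')
      obtain rfl : e = tagR e' := heq
      exact h2.cirr e' he' hc
  · rintro e he f hf (⟨e', he', f', hf', hc, rfl, rfl⟩ | ⟨e', he', f', hf', hc, rfl, rfl⟩)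
    · exact Or.inl ⟨f', hf', e', he', h1.csym e' he' f' hf' hc, rfl, rfl⟩
    · exact Or.inr ⟨f', hf', e', he', h2.csym e' he' f' hf' hc, rfl, rfl⟩
  · rintro B (hB | hB)
    · obtain ⟨e, he, hs⟩ := h1.cover B hB
      exact ⟨tagL e, tensor_ev_mem.2 (Or.inl ⟨e, he, rfl⟩),
        by rw [tensor_lbl_tagL]; exact hs⟩
    · obtain ⟨e, he, hs⟩ := h2.cover B hB
      exact ⟨tagR e, tensor_ev_mem.2 (Or.inr ⟨e, he, rfl⟩),
        by rw [tensor_lbl_tagR]; exact hs⟩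
  · intro B
    rw [minLblP_tensor, h1.minp, h2.minp, hat_union]
  · intro x hx B hB
    obtain ⟨y, hy, z, hz, rfl⟩ := maxC_tensor hx
    rcases hB with hB1 | hB2
    · have hpc : (esTensor E1 E2).projC (tagL '' y ∪ tagR '' z) B =
          tagL '' (E1.projC y B) := by
        ext u
        simp only [ES.projC, Set.mem_setOf_eq, Set.mem_image]
        constructor
        · rintro ⟨(⟨e, he, rfl⟩ | ⟨e, he, rfl⟩), hs⟩
          · rw [tensor_lbl_tagL] at hs
            exact ⟨e, ⟨he, hs⟩, rfl⟩
          · rw [tensor_lbl_tagR] at hs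
            exact absurd (hs ▸ h2.sbjin e (hz.config.subset_ev he)) (fun h => hd B hB1 h)
        · rintro ⟨e, ⟨he, hs⟩, rfl⟩
          exact ⟨Or.inl ⟨e, he, rfl⟩, by rw [tensor_lbl_tagL]; exact hs⟩
      rw [hpc, tensor_maxIn_tagL (fun e he => hy.config.subset_ev he.1)]
      obtain ⟨hne, hsub⟩ := h1.maxc y hy B hB1
      constructor
      · obtain ⟨l, e, he, rfl⟩ := hne
        exact ⟨E1.lbl e, tagL e, ⟨e, he, rfl⟩, tensor_lbl_tagL e⟩
      · rintro l ⟨u, ⟨e, he, rfl⟩, rfl⟩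
        rw [tensor_lbl_tagL]
        have : E1.lbl e ∈ hat Λ1 B := hsub ⟨e, he, rfl⟩
        rw [hat_union]
        exact Or.inl this
    · have hpc : (esTensor E1 E2).projC (tagL '' y ∪ tagR '' z) B =
          tagR '' (E2.projC z B) := by
        ext u
        simp only [ES.projC, Set.mem_setOf_eq, Set.mem_image]
        constructor
        · rintro ⟨(⟨e, he, rfl⟩ | ⟨e, he, rfl⟩), hs⟩
          · rw [tensor_lbl_tagL] at hs
            exact absurd (hs ▸ h1.sbjin e (hy.config.subset_ev he)) (fun h => hd B h hB2)
          · rw [tensor_lbl_tagR] at hs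
            exact ⟨e, ⟨he, hs⟩, rfl⟩
        · rintro ⟨e, ⟨he, hs⟩, rfl⟩
          exact ⟨Or.inr ⟨e, he, rfl⟩, by rw [tensor_lbl_tagR]; exact hs⟩
      rw [hpc, tensor_maxIn_tagR (fun e he => hz.config.subset_ev he.1)]
      obtain ⟨hne, hsub⟩ := h2.maxc z hz B hB2
      constructor
      · obtain ⟨l, e, he, rfl⟩ := hne
        exact ⟨E2.lbl e, tagR e, ⟨e, he, rfl⟩, tensor_lbl_tagR e⟩
      · rintro l ⟨u, ⟨e, he, rfl⟩, rfl⟩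
        rw [tensor_lbl_tagR]
        have : E2.lbl e ∈ hat Λ2 B := hsub ⟨e, he, rfl⟩
        rw [hat_union]
        exact Or.inr this

end Aux4
section Aux5

variable {P M : Type} {E1 E2 : ES P M}

lemma maxC_sum (hfin1 : E1.ev.Finite) (hrk1 : E1.HasRank)
    (hirr1 : ∀ e ∈ E1.ev, ¬ E1.conf e e)
    (hfin2 : E2.ev.Finite) (hrk2 : E2.HasRank)
    (hirr2 : ∀ e ∈ E2.ev, ¬ E2.conf e e)
    {x : Set ℕ} (hx : x ∈ (esSum E1 E2).MaxC) :
    (∃ y ∈ E1.MaxC, x = tagL '' y) ∨ (∃ z ∈ E2.MaxC, x = tagR '' z) := by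
  obtain ⟨hcfg, hmax⟩ := hx
  by_cases hL : ∃ e, tagL e ∈ x
  · -- no tagR events
    obtain ⟨e0, he0⟩ := hL
    have he0ev : e0 ∈ E1.ev := by
      rcases tensor_ev_mem.1 (hcfg.subset_ev he0) with ⟨e', he', heq⟩ | ⟨e', he', heq⟩
      · obtain rfl := tagL_eq_tagL.1 heq; exact he'
      · exact absurd heq tagL_ne_tagR
    have hnoR : ∀ f, tagR f ∉ x := by
      intro f hf
      have hfev : f ∈ E2.ev := by
        rcases tensor_ev_mem.1 (hcfg.subset_ev hf) with ⟨e', he', heq⟩ | ⟨e', he', heq⟩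
        · exact absurd heq tagR_ne_tagL
        · obtain rfl := tagR_eq_tagR.1 heq; exact he'
      exact hcfg.nconf (tagL e0) he0 (tagR f) hf
        (Or.inr ⟨e0, he0ev, f, hfev, Or.inl ⟨rfl, rfl⟩⟩)
    set y := tagL ⁻¹' x with hy
    have hdec : x = tagL '' y := by
      ext u
      constructor
      · intro hu
        rcases tensor_ev_mem.1 (hcfg.subset_ev hu) with ⟨e, he, rfl⟩ | ⟨e, he, rfl⟩
        · exact ⟨e, hu, rfl⟩
        · exact absurd hu (hnoR e)
      · rintro ⟨e, he, rfl⟩; exact he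
    have hycfg : E1.Config y := sum_config_L hcfg
    refine Or.inl ⟨y, ⟨hycfg, ?_⟩, hdec⟩
    intro y' hy' hyy'
    have hcfg' : (esSum E1 E2).Config (tagL '' y') := by
      refine ⟨?_, ?_, ?_⟩
      · rintro u ⟨e, he, rfl⟩
        exact Or.inl ⟨e, hy'.subset_ev he, rfl⟩
      · rintro u hu v hv hle
        rcases hle with ⟨e, he, f, hf, hlef, rfl, rfl⟩ | ⟨e, he, f, hf, hlef, rfl, rfl⟩
        · obtain ⟨f', hf', heq⟩ := hu
          obtain rfl := tagL_eq_tagL.1 heq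
          exact ⟨e, hy'.down f' hf' e he hlef, rfl⟩
        · obtain ⟨f', hf', heq⟩ := hu
          exact absurd heq tagL_ne_tagR
      · rintro u ⟨e, he, rfl⟩ v ⟨f, hf, rfl⟩ hc
        rcases hc with (⟨e', he', f', hf', hc', heq, heq'⟩ | ⟨e', he', f', hf', hc', heq, heq'⟩) |
          ⟨e', he', f', hf', (⟨heq, heq'⟩ | ⟨heq, heq'⟩)⟩
        · obtain rfl := tagL_eq_tagL.1 heq
          obtain rfl := tagL_eq_tagL.1 heq'
          exact hy'.nconf e he f hf hc'
        · exact absurd heq tagL_ne_tagR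
        · exact absurd heq' tagL_ne_tagR
        · exact absurd heq tagL_ne_tagR
    have hsub : x ⊆ tagL '' y' := by
      rw [hdec]; exact Set.image_mono  hyy'
    have heq := hmax _ hcfg' hsub
    ext e
    constructor
    · intro he
      have hmem : tagL e ∈ tagL '' y' := ⟨e, he, rfl⟩
      rw [heq] at hmem
      exact hmem
    · exact fun he => hyy' he
  · by_cases hR : ∃ e, tagR e ∈ x
    · -- all tagR
      obtain ⟨e0, he0⟩ := hR
      set z := tagR ⁻¹' x with hz
      have hdec : x = tagR '' z := by
        ext u
        constructor
        · intro hu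
          rcases tensor_ev_mem.1 (hcfg.subset_ev hu) with ⟨e, he, rfl⟩ | ⟨e, he, rfl⟩
          · exact absurd ⟨e, hu⟩ hL
          · exact ⟨e, hu, rfl⟩
        · rintro ⟨e, he, rfl⟩; exact he
      have hzcfg : E2.Config z := sum_config_R hcfg
      refine Or.inr ⟨z, ⟨hzcfg, ?_⟩, hdec⟩
      intro z' hz' hzz'
      have hcfg' : (esSum E1 E2).Config (tagR '' z') := by
        refine ⟨?_, ?_, ?_⟩
        · rintro u ⟨e, he, rfl⟩
          exact Or.inr ⟨e, hz'.subset_ev he, rfl⟩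
        · rintro u hu v hv hle
          rcases hle with ⟨e, he, f, hf, hlef, rfl, rfl⟩ | ⟨e, he, f, hf, hlef, rfl, rfl⟩
          · obtain ⟨f', hf', heq⟩ := hu
            exact absurd heq tagR_ne_tagL
          · obtain ⟨f', hf', heq⟩ := hu
            obtain rfl := tagR_eq_tagR.1 heq
            exact ⟨e, hz'.down f' hf' e he hlef, rfl⟩
        · rintro u ⟨e, he, rfl⟩ v ⟨f, hf, rfl⟩ hc
          rcases hc with (⟨e', he', f', hf', hc', heq, heq'⟩ | ⟨e', he', f', hf', hc', heq, heq'⟩) |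
            ⟨e', he', f', hf', (⟨heq, heq'⟩ | ⟨heq, heq'⟩)⟩
          · exact absurd heq tagR_ne_tagL
          · obtain rfl := tagR_eq_tagR.1 heq
            obtain rfl := tagR_eq_tagR.1 heq'
            exact hz'.nconf e he f hf hc'
          · exact absurd heq tagR_ne_tagL
          · exact absurd heq' tagR_ne_tagL
      have hsub : x ⊆ tagR '' z' := by
        rw [hdec]; exact Set.image_mono  hzz'
      have heq := hmax _ hcfg' hsub
      ext e
      constructor
      · intro he
        have hmem : tagR e ∈ tagR '' z' := ⟨e, he, rfl⟩
        rw [heq] at hmem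
        exact hmem
      · exact fun he => hzz' he
    · -- x is empty, both components must be empty
      have hxe : x = ∅ := by
        ext u
        simp only [Set.mem_empty_iff_false, iff_false]
        intro hu
        rcases tensor_ev_mem.1 (hcfg.subset_ev hu) with ⟨e, he, rfl⟩ | ⟨e, he, rfl⟩
        · exact hL ⟨e, hu⟩
        · exact hR ⟨e, hu⟩
      have hE1 : E1.ev = ∅ := by
        by_contra h
        obtain ⟨e0, ⟨he0, hmin0⟩⟩ := ES.exists_minIn hfin1 hrk1 subset_rfl
          (Set.nonempty_iff_ne_empty.2 h)
        have hcfg' : (esSum E1 E2).Config {tagL e0} := by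
          refine ⟨?_, ?_, ?_⟩
          · rintro u rfl
            exact Or.inl ⟨e0, he0, rfl⟩
          · rintro u rfl v hv hle
            rcases hle with ⟨e, he, f, hf, hlef, rfl, heq⟩ | ⟨e, he, f, hf, hlef, rfl, heq⟩
            · obtain rfl := tagL_eq_tagL.1 heq
              have := hmin0 e he hlef
              simp [this]
            · exact absurd heq tagL_ne_tagR
          · rintro u rfl v rfl hc
            rcases hc with (⟨e', he', f', hf', hc', heq, heq'⟩ | ⟨e', he', f', hf', hc', heq, heq'⟩) |
              ⟨e', he', f', hf', (⟨heq, heq'⟩ | ⟨heq, heq'⟩)⟩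
            · obtain rfl := tagL_eq_tagL.1 heq
              obtain rfl := tagL_eq_tagL.1 heq'
              exact hirr1 e0 he' hc'
            · exact absurd heq tagL_ne_tagR
            · exact absurd heq' tagL_ne_tagR
            · exact absurd heq tagL_ne_tagR
        have hsub : x ⊆ {tagL e0} := by rw [hxe]; exact Set.empty_subset _
        have heq := hmax _ hcfg' hsub
        have : tagL e0 ∈ x := by rw [← heq]; rfl
        exact hL ⟨e0, this⟩
      refine Or.inl ⟨∅, ⟨E1.config_empty, ?_⟩, by rw [hxe]; simp⟩
      intro y hy hsub
      have : y ⊆ (∅ : Set ℕ) := hE1 ▸ hy.subset_ev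
      exact Set.subset_empty_iff.1 this

lemma good_sum {Γ : Set P} {φ1 φ2 Λ1 Λ2 : Set (Label P M)}
    (h1 : Good Γ φ1 Λ1 E1) (h2 : Good Γ φ2 Λ2 E2) :
    Good Γ (φ1 ∪ φ2) (Λ1 ∪ Λ2) (esSum E1 E2) := by
  constructor
  · exact (h1.fin.image tagL).union (h2.fin.image tagR)
  · obtain ⟨r1, hr1⟩ := h1.rk
    obtain ⟨r2, hr2⟩ := h2.rk
    refine ⟨fun u => if (Nat.unpair u).1 = 0 then r1 (Nat.unpair u).2
      else r2 (Nat.unpair u).2, ?_⟩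
    rintro u hu v hv (⟨e, he, f, hf, hlef, rfl, rfl⟩ | ⟨e, he, f, hf, hlef, rfl, rfl⟩) hne
    · simp only [unpair_tagL, if_pos rfl]
      exact hr1 e he f hf hlef (fun h => hne (by rw [h]))
    · simp only [unpair_tagR]
      norm_num
      exact hr2 e he f hf hlef (fun h => hne (by rw [h]))
  · intro e he
    rcases tensor_ev_mem.1 he with ⟨e', he', rfl⟩ | ⟨e', he', rfl⟩
    · exact (tensor_lbl_tagL (E1 := E1) (E2 := E2) e') ▸ h1.proper e' he'
    · exact (tensor_lbl_tagR (E1 := E1) (E2 := E2) e') ▸ h2.proper e' he'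
  · intro e he
    rcases tensor_ev_mem.1 he with ⟨e', he', rfl⟩ | ⟨e', he', rfl⟩
    · exact (tensor_lbl_tagL (E1 := E1) (E2 := E2) e') ▸ h1.sbjin e' he'
    · exact (tensor_lbl_tagR (E1 := E1) (E2 := E2) e') ▸ h2.sbjin e' he'
  · intro e he hin
    rcases tensor_ev_mem.1 he with ⟨e', he', rfl⟩ | ⟨e', he', rfl⟩
    · rw [show (esSum E1 E2).lbl (tagL e') = E1.lbl e' from tensor_lbl_tagL e'] at hin
      obtain ⟨o, ho, hout, hle, hne⟩ := h1.inpB e' he' hin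
      refine ⟨tagL o, Or.inl ⟨o, ho, rfl⟩, ?_, ?_, ?_⟩
      · exact (tensor_lbl_tagL (E1 := E1) (E2 := E2) o) ▸ hout
      · exact Or.inl ⟨o, ho, e', he', hle, rfl, rfl⟩
      · simpa using hne
    · rw [show (esSum E1 E2).lbl (tagR e') = E2.lbl e' from tensor_lbl_tagR e'] at hin
      obtain ⟨o, ho, hout, hle, hne⟩ := h2.inpB e' he' hin
      refine ⟨tagR o, Or.inr ⟨o, ho, rfl⟩, ?_, ?_, ?_⟩
      · exact (tensor_lbl_tagR (E1 := E1) (E2 := E2) o) ▸ hout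
      · exact Or.inr ⟨o, ho, e', he', hle, rfl, rfl⟩
      · simpa using hne
  · rintro e he ((⟨e', he', f', hf', hc, heq, heq'⟩ | ⟨e', he', f', hf', hc, heq, heq'⟩) |
      ⟨e', he', f', hf', (⟨heq, heq'⟩ | ⟨heq, heq'⟩)⟩)
    · obtain rfl := tagL_injective (heq.symm.trans heq')
      obtain rfl : e = tagL e' := heq
      exact h1.cirr e' he' hc
    · obtain rfl := tagR_injective (heq.symm.trans heq')
      obtain rfl : e = tagR e' := heq
      exact h2.cirr e' he' hc
    · exact tagL_ne_tagR (heq.symm.trans heq')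
    · exact tagR_ne_tagL (heq.symm.trans heq')
  · rintro e he f hf ((⟨e', he', f', hf', hc, rfl, rfl⟩ | ⟨e', he', f', hf', hc, rfl, rfl⟩) |
      ⟨e', he', f', hf', (⟨rfl, rfl⟩ | ⟨rfl, rfl⟩)⟩)
    · exact Or.inl (Or.inl ⟨f', hf', e', he', h1.csym e' he' f' hf' hc, rfl, rfl⟩)
    · exact Or.inl (Or.inr ⟨f', hf', e', he', h2.csym e' he' f' hf' hc, rfl, rfl⟩)
    · exact Or.inr ⟨e', he', f', hf', Or.inr ⟨rfl, rfl⟩⟩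
    · exact Or.inr ⟨e', he', f', hf', Or.inl ⟨rfl, rfl⟩⟩
  · intro B hB
    obtain ⟨e, he, hs⟩ := h1.cover B hB
    refine ⟨tagL e, Or.inl ⟨e, he, rfl⟩, ?_⟩
    rw [show (esSum E1 E2).lbl (tagL e) = E1.lbl e from tensor_lbl_tagL e]
    exact hs
  · intro B
    rw [minLblP_sum, h1.minp, h2.minp, hat_union]
  · intro x hx B hB
    rcases maxC_sum h1.fin h1.rk h1.cirr h2.fin h2.rk h2.cirr hx with
      ⟨y, hy, rfl⟩ | ⟨z, hz, rfl⟩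
    · have hpc : (esSum E1 E2).projC (tagL '' y) B = tagL '' (E1.projC y B) := by
        ext u
        simp only [ES.projC, Set.mem_setOf_eq, Set.mem_image]
        constructor
        · rintro ⟨⟨e, he, rfl⟩, hs⟩
          rw [show (esSum E1 E2).lbl (tagL e) = E1.lbl e from tensor_lbl_tagL e] at hs
          exact ⟨e, ⟨he, hs⟩, rfl⟩
        · rintro ⟨e, ⟨he, hs⟩, rfl⟩
          exact ⟨⟨e, he, rfl⟩, by
            rw [show (esSum E1 E2).lbl (tagL e) = E1.lbl e from tensor_lbl_tagL e]; exact hs⟩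
      have hmaxIn : (esSum E1 E2).maxIn (tagL '' (E1.projC y B)) =
          tagL '' (E1.maxIn (E1.projC y B)) := by
        rw [sum_maxIn]
        exact tensor_maxIn_tagL (fun e he => hy.config.subset_ev he.1)
      rw [hpc, hmaxIn]
      obtain ⟨hne, hsub⟩ := h1.maxc y hy B hB
      constructor
      · obtain ⟨l, e, he, rfl⟩ := hne
        exact ⟨E1.lbl e, tagL e, ⟨e, he, rfl⟩, tensor_lbl_tagL e⟩
      · rintro l ⟨u, ⟨e, he, rfl⟩, rfl⟩
        rw [show (esSum E1 E2).lbl (tagL e) = E1.lbl e from tensor_lbl_tagL e]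
        rw [hat_union]
        exact Or.inl (hsub ⟨e, he, rfl⟩)
    · have hpc : (esSum E1 E2).projC (tagR '' z) B = tagR '' (E2.projC z B) := by
        ext u
        simp only [ES.projC, Set.mem_setOf_eq, Set.mem_image]
        constructor
        · rintro ⟨⟨e, he, rfl⟩, hs⟩
          rw [show (esSum E1 E2).lbl (tagR e) = E2.lbl e from tensor_lbl_tagR e] at hs
          exact ⟨e, ⟨he, hs⟩, rfl⟩
        · rintro ⟨e, ⟨he, hs⟩, rfl⟩
          exact ⟨⟨e, he, rfl⟩, by
            rw [show (esSum E1 E2).lbl (tagR e) = E2.lbl e from tensor_lbl_tagR e]; exact hs⟩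
      have hmaxIn : (esSum E1 E2).maxIn (tagR '' (E2.projC z B)) =
          tagR '' (E2.maxIn (E2.projC z B)) := by
        rw [sum_maxIn]
        exact tensor_maxIn_tagR (fun e he => hz.config.subset_ev he.1)
      rw [hpc, hmaxIn]
      obtain ⟨hne, hsub⟩ := h2.maxc z hz B hB
      constructor
      · obtain ⟨l, e, he, rfl⟩ := hne
        exact ⟨E2.lbl e, tagR e, ⟨e, he, rfl⟩, tensor_lbl_tagR e⟩
      · rintro l ⟨u, ⟨e, he, rfl⟩, rfl⟩
        rw [show (esSum E1 E2).lbl (tagR e) = E2.lbl e from tensor_lbl_tagR e]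
        rw [hat_union]
        exact Or.inr (hsub ⟨e, he, rfl⟩)

lemma wb_of_compch {Γ : Set P} {φ1 φ2 Λ1 Λ2 : Set (Label P M)}
    (h1 : Good Γ φ1 Λ1 E1) (h2 : Good Γ φ2 Λ2 E2)
    (hc : compch φ1 φ2 Γ) : wb E1 E2 := by
  obtain ⟨A, hA, ⟨⟨hdisj, hout⟩, hne1, hne2⟩, huniq, hpass⟩ := hc
  have hmin1 : ∀ B, minLblP E1 B = hat φ1 B := h1.minp
  have hmin2 : ∀ B, minLblP E2 B = hat φ2 B := h2.minp
  refine ⟨A, ⟨?_, ?_, ?_, ?_⟩, ?_, ?_⟩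
  · rw [hmin1]
    intro h
    exact hne1 h
  · rw [hmin2]
    intro h
    exact hne2 h
  · rw [hmin1, hmin2]; exact hdisj
  · rw [hmin1, hmin2]; exact hout
  · intro A' hA'
    obtain ⟨hne1', hne2', hdisj', hout'⟩ := hA'
    have hA'Γ : A' ∈ Γ := by
      rw [hmin1] at hne1'
      obtain ⟨l, hl, hsbj⟩ := Set.nonempty_iff_ne_empty.2 hne1'
      have : l ∈ minLblP E1 A' := by rw [hmin1]; exact ⟨hl, hsbj⟩
      obtain ⟨e, ⟨⟨heev, hesbj⟩, -⟩, rfl⟩ := this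
      exact hesbj ▸ h1.sbjin e heev
    refine huniq A' hA'Γ ⟨⟨?_, ?_⟩, ?_, ?_⟩
    · rw [← hmin1, ← hmin2]; exact hdisj'
    · rw [← hmin1, ← hmin2]; exact hout'
    · rw [← hmin1]; exact hne1'
    · rw [← hmin2]; exact hne2'
  · intro B hB
    by_cases hBΓ : B ∈ Γ
    · obtain ⟨⟨hd, hin⟩, hiff⟩ := hpass B hBΓ hB
      exact ⟨by rw [hmin1, hmin2]; exact hd, by rw [hmin1, hmin2]; exact hin,
        by rw [hmin1, hmin2]; exact hiff⟩
    · have e1 : minLblP E1 B = ∅ := h1.minLblP_empty hBΓ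
      have e2 : minLblP E2 B = ∅ := h2.minLblP_empty hBΓ
      refine ⟨?_, ?_, ?_⟩
      · rw [e1, e2]; simp
      · rw [e1, e2]; simp
      · rw [e1, e2]

end Aux5
section Aux6

variable {P M : Type} {E1 E2 : ES P M}

lemma seq_ev_mem {u : ℕ} : u ∈ (esSeq E1 E2).ev ↔
    (∃ e ∈ E1.ev, u = tagL e) ∨
    (∃ x ∈ E1.MaxC, ∃ e ∈ E2.ev, u = tagC (encSet x) e) := by
  simp only [esSeq, Set.mem_union, Set.mem_image, Set.mem_setOf_eq]
  constructor
  · rintro (⟨e, he, rfl⟩ | ⟨x, hx, e, he, rfl⟩)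
    · exact Or.inl ⟨e, he, rfl⟩
    · exact Or.inr ⟨x, hx, e, he, rfl⟩
  · rintro (⟨e, he, rfl⟩ | ⟨x, hx, e, he, rfl⟩)
    · exact Or.inl ⟨e, he, rfl⟩
    · exact Or.inr ⟨x, hx, e, he, rfl⟩

@[simp] lemma seq_lbl_tagL (e : ℕ) : (esSeq E1 E2).lbl (tagL e) = E1.lbl e := by
  simp [esSeq]

@[simp] lemma seq_lbl_tagC (k e : ℕ) : (esSeq E1 E2).lbl (tagC k e) = E2.lbl e := by
  simp [esSeq, tagC]

lemma henc (hfin1 : E1.ev.Finite) {x1 x2 : Set ℕ} (h1 : x1 ∈ E1.MaxC)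
    (h2 : x2 ∈ E1.MaxC) (h : encSet x1 = encSet x2) : x1 = x2 :=
  encSet_inj (ES.MaxC.finite hfin1 h1) (ES.MaxC.finite hfin1 h2) h

lemma maxC_seq (hfin1 : E1.ev.Finite)
    (hcsym1 : ∀ e ∈ E1.ev, ∀ f ∈ E1.ev, E1.conf e f → E1.conf f e)
    (hfin2 : E2.ev.Finite) (hrk2 : E2.HasRank)
    (hirr2 : ∀ e ∈ E2.ev, ¬ E2.conf e e)
    {x : Set ℕ} (hx : x ∈ (esSeq E1 E2).MaxC) :
    ∃ y ∈ E1.MaxC, ∃ z ∈ E2.MaxC, x = tagL '' y ∪ tagC (encSet y) '' z := by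
  obtain ⟨hcfg, hmax⟩ := hx
  set y := tagL ⁻¹' x with hydef
  have hymem : ∀ e, tagL e ∈ x → e ∈ E1.ev := by
    intro e he
    rcases seq_ev_mem.1 (hcfg.subset_ev he) with ⟨e', he', heq⟩ | ⟨x1, hx1, e', he', heq⟩
    · obtain rfl := tagL_eq_tagL.1 heq; exact he'
    · exact absurd heq tagL_ne_tagC
  have hysub : y ⊆ E1.ev := fun e he => hymem e he
  have hycfg : E1.Config y := by
    refine ⟨hysub, ?_, ?_⟩
    · intro e he f hf hle
      have hle' : (esSeq E1 E2).le (tagL f) (tagL e) :=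
        Or.inl ⟨f, hf, e, hymem e he, hle, rfl, rfl⟩
      exact hcfg.down (tagL e) he (tagL f) (Or.inl ⟨f, hf, rfl⟩) hle'
    · intro e he f hf hc
      exact hcfg.nconf (tagL e) he (tagL f) hf
        (Or.inl ⟨e, hymem e he, f, hymem f hf, hc, rfl, rfl⟩)
  by_cases hcop : ∃ x1 ∈ E1.MaxC, ∃ f ∈ E2.ev, tagC (encSet x1) f ∈ x
  · obtain ⟨x0, hx0M, f0, hf0, hcop0⟩ := hcop
    have hcopu : ∀ x1 ∈ E1.MaxC, ∀ f ∈ E2.ev, tagC (encSet x1) f ∈ x → x1 = x0 := by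
      intro x1 h1 f hf hmem
      by_contra hne
      exact hcfg.nconf _ hmem _ hcop0
        (Or.inr (Or.inr (Or.inl ⟨x1, h1, x0, hx0M, hne, f, hf, f0, hf0, rfl, rfl⟩)))
    have hnc : ∀ e ∈ y, ∀ e' ∈ x0, ¬ E1.conf e e' := by
      intro e he e' he' hc
      exact hcfg.nconf (tagL e) he (tagC (encSet x0) f0) hcop0
        (Or.inr (Or.inr (Or.inr ⟨x0, hx0M, e, hymem e he, ⟨e', he', hc⟩, f0, hf0,
          Or.inl ⟨rfl, rfl⟩⟩)))
    have hnc' : ∀ e ∈ y, ∀ e' ∈ x0, ¬ E1.conf e' e := by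
      intro e he e' he' hc
      exact hnc e he e' he'
        (hcsym1 e' (hx0M.config.subset_ev he') e (hysub he) hc)
    have hx0y : x0 ⊆ y := by
      have hLmem : ∀ v ∈ x ∪ tagL '' x0, ∀ (x1 : Set ℕ) (f1 : ℕ),
          v = tagC (encSet x1) f1 → v ∈ x := by
        rintro v (hv | ⟨e, he, rfl⟩) x1 f1 heq
        · exact hv
        · exact absurd heq tagL_ne_tagC
      have hcfg' : (esSeq E1 E2).Config (x ∪ tagL '' x0) := by
        refine ⟨?_, ?_, ?_⟩
        · rintro u (hu | ⟨e, he, rfl⟩)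
          · exact hcfg.subset_ev hu
          · exact Or.inl ⟨e, hx0M.config.subset_ev he, rfl⟩
        · rintro u (hu | ⟨e, he, rfl⟩) v hv hle
          · exact Or.inl (hcfg.down u hu v hv hle)
          · rcases hle with ⟨e1, he1, f1, hf1, hle1, hveq, hueq⟩ |
              ⟨x1, hx1, e1, he1, f1, hf1, hle1, hveq, hueq⟩ |
              ⟨x1, hx1, e1, he1, f1, hf1, hsbj, hveq, hueq⟩
            · obtain rfl := tagL_eq_tagL.1 hueq
              subst hveq
              exact Or.inr ⟨e1, hx0M.config.down e he e1 he1 hle1, rfl⟩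
            · exact absurd hueq tagL_ne_tagC
            · exact absurd hueq tagL_ne_tagC
        · rintro u hu w hw hc
          rcases hc with ⟨e1, he1, f1, hf1, hc1, hueq, hweq⟩ |
            ⟨x1, hx1, e1, he1, f1, hf1, hc1, hueq, hweq⟩ |
            ⟨x1, hx1, x2, hx2, hne12, e1, he1, f1, hf1, hueq, hweq⟩ |
            ⟨x1, hx1, e1, he1, hex, f1, hf1, (⟨hueq, hweq⟩ | ⟨hueq, hweq⟩)⟩
          · -- both tagL
            have hu' : e1 ∈ y ∨ e1 ∈ x0 := by
              rcases hu with hu | ⟨e, he, heq⟩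
              · exact Or.inl (show tagL e1 ∈ x from hueq ▸ hu)
              · obtain rfl := tagL_eq_tagL.1 (heq.trans hueq); exact Or.inr he
            have hw' : f1 ∈ y ∨ f1 ∈ x0 := by
              rcases hw with hw | ⟨e, he, heq⟩
              · exact Or.inl (show tagL f1 ∈ x from hweq ▸ hw)
              · obtain rfl := tagL_eq_tagL.1 (heq.trans hweq); exact Or.inr he
            rcases hu' with hu' | hu' <;> rcases hw' with hw' | hw'
            · exact hycfg.nconf e1 hu' f1 hw' hc1
            · exact hnc e1 hu' f1 hw' hc1
            · exact hnc' f1 hw' e1 hu' hc1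
            · exact hx0M.config.nconf e1 hu' f1 hw' hc1
          · -- both tagC: both in x
            exact hcfg.nconf u (hLmem u hu x1 e1 hueq) w (hLmem w hw x1 f1 hweq)
              (Or.inr (Or.inl ⟨x1, hx1, e1, he1, f1, hf1, hc1, hueq, hweq⟩))
          · exact hcfg.nconf u (hLmem u hu x1 e1 hueq) w (hLmem w hw x2 f1 hweq)
              (Or.inr (Or.inr (Or.inl ⟨x1, hx1, x2, hx2, hne12, e1, he1, f1, hf1,
                hueq, hweq⟩)))
          · -- u = tagL e1, w = tagC (encSet x1) f1
            have hw' : w ∈ x := hLmem w hw x1 f1 hweq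
            rcases hu with hu | ⟨e, he, heq⟩
            · exact hcfg.nconf u hu w hw'
                (Or.inr (Or.inr (Or.inr ⟨x1, hx1, e1, he1, hex, f1, hf1,
                  Or.inl ⟨hueq, hweq⟩⟩)))
            · obtain rfl := tagL_eq_tagL.1 (heq.trans hueq)
              have hx10 : x1 = x0 := hcopu x1 hx1 f1 hf1 (hweq ▸ hw')
              subst hx10
              obtain ⟨e', he', hce⟩ := hex
              exact hx0M.config.nconf e he e' he' hce
          · -- u = tagC (encSet x1) f1, w = tagL e1
            have hu' : u ∈ x := hLmem u hu x1 f1 hueq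
            rcases hw with hw | ⟨e, he, heq⟩
            · exact hcfg.nconf u hu' w hw
                (Or.inr (Or.inr (Or.inr ⟨x1, hx1, e1, he1, hex, f1, hf1,
                  Or.inr ⟨hueq, hweq⟩⟩)))
            · obtain rfl := tagL_eq_tagL.1 (heq.trans hweq)
              have hx10 : x1 = x0 := hcopu x1 hx1 f1 hf1 (hueq ▸ hu')
              subst hx10
              obtain ⟨e', he', hce⟩ := hex
              exact hx0M.config.nconf e he e' he' hce
      have heq := hmax _ hcfg' (Set.subset_union_left)
      intro e he
      have hmem : tagL e ∈ x ∪ tagL '' x0 := Or.inr ⟨e, he, rfl⟩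
      rw [heq] at hmem
      exact hmem
    have hyx0 : y = x0 := hx0M.2 y hycfg hx0y
    have hyM : y ∈ E1.MaxC := hyx0 ▸ hx0M
    have hcop0' : ∀ x1 ∈ E1.MaxC, ∀ f ∈ E2.ev, tagC (encSet x1) f ∈ x → x1 = y := by
      intro x1 h1 f hf hm
      rw [hyx0]
      exact hcopu x1 h1 f hf hm
    set z := {e | e ∈ E2.ev ∧ tagC (encSet y) e ∈ x} with hzdef
    have hzcfg : E2.Config z := by
      refine ⟨fun e he => he.1, ?_, ?_⟩
      · intro e he f hf hle
        have hle' : (esSeq E1 E2).le (tagC (encSet y) f) (tagC (encSet y) e) :=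
          Or.inr (Or.inl ⟨y, hyM, f, hf, e, he.1, hle, rfl, rfl⟩)
        have hv : tagC (encSet y) f ∈ (esSeq E1 E2).ev :=
          seq_ev_mem.2 (Or.inr ⟨y, hyM, f, hf, rfl⟩)
        exact ⟨hf, hcfg.down _ he.2 _ hv hle'⟩
      · intro e he f hf hc
        exact hcfg.nconf _ he.2 _ hf.2
          (Or.inr (Or.inl ⟨y, hyM, e, he.1, f, hf.1, hc, rfl, rfl⟩))
    have hdec : x = tagL '' y ∪ tagC (encSet y) '' z := by
      ext u
      constructor
      · intro hu
        rcases seq_ev_mem.1 (hcfg.subset_ev hu) with ⟨e, he, rfl⟩ | ⟨x1, hx1, e, he, rfl⟩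
        · exact Or.inl ⟨e, hu, rfl⟩
        · have hb := hcop0' x1 hx1 e he hu
          subst hb
          exact Or.inr ⟨e, ⟨he, hu⟩, rfl⟩
      · rintro (⟨e, he, rfl⟩ | ⟨e, he, rfl⟩)
        · exact he
        · exact he.2
    refine ⟨y, hyM, z, ⟨hzcfg, ?_⟩, hdec⟩
    intro z' hz' hzz'
    have hbase : ∀ v ∈ x ∪ tagC (encSet y) '' z', ∀ x1 ∈ E1.MaxC, ∀ f1 ∈ E2.ev,
        v = tagC (encSet x1) f1 → x1 = y ∧ f1 ∈ z' := by
      rintro v (hv | ⟨e, he, heq'⟩) x1 h1 f1 hf1 heq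
      · have hb := hcop0' x1 h1 f1 hf1 (heq ▸ hv)
        subst hb
        exact ⟨rfl, hzz' ⟨hf1, heq ▸ hv⟩⟩
      · obtain ⟨hk, hef⟩ := tagC_eq_tagC.1 (heq'.trans heq)
        have hb : x1 = y := henc hfin1 h1 hyM hk.symm
        exact ⟨hb, hef ▸ he⟩
    have hLmem : ∀ v ∈ x ∪ tagC (encSet y) '' z', ∀ e1 : ℕ, v = tagL e1 → v ∈ x := by
      rintro v (hv | ⟨e, he, rfl⟩) e1 heq
      · exact hv
      · exact absurd heq tagC_ne_tagL
    have hcfg'' : (esSeq E1 E2).Config (x ∪ tagC (encSet y) '' z') := by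
      refine ⟨?_, ?_, ?_⟩
      · rintro u (hu | ⟨e, he, rfl⟩)
        · exact hcfg.subset_ev hu
        · exact seq_ev_mem.2 (Or.inr ⟨y, hyM, e, hz'.subset_ev he, rfl⟩)
      · rintro u (hu | ⟨e, he, rfl⟩) v hv hle
        · exact Or.inl (hcfg.down u hu v hv hle)
        · rcases hle with ⟨e1, he1, f1, hf1, hle1, hveq, hueq⟩ |
            ⟨x1, hx1, e1, he1, f1, hf1, hle1, hveq, hueq⟩ |
            ⟨x1, hx1, e1, he1, f1, hf1, hsbj, hveq, hueq⟩
          · exact absurd hueq tagC_ne_tagL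
          · obtain ⟨hk, hef⟩ := tagC_eq_tagC.1 hueq
            subst hef
            refine Or.inr ⟨e1, hz'.down e he e1 he1 hle1, ?_⟩
            rw [hveq, hk]
          · obtain ⟨hk, hef⟩ := tagC_eq_tagC.1 hueq
            have hb : x1 = y := henc hfin1 hx1 hyM hk.symm
            subst hb
            refine Or.inl ?_
            rw [hveq]
            exact he1
      · rintro u hu w hw hc
        rcases hc with ⟨e1, he1, f1, hf1, hc1, hueq, hweq⟩ |
          ⟨x1, hx1, e1, he1, f1, hf1, hc1, hueq, hweq⟩ |
          ⟨x1, hx1, x2, hx2, hne12, e1, he1, f1, hf1, hueq, hweq⟩ |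
          ⟨x1, hx1, e1, he1, hex, f1, hf1, (⟨hueq, hweq⟩ | ⟨hueq, hweq⟩)⟩
        · exact hcfg.nconf u (hLmem u hu e1 hueq) w (hLmem w hw f1 hweq)
            (Or.inl ⟨e1, he1, f1, hf1, hc1, hueq, hweq⟩)
        · obtain ⟨-, he1z⟩ := hbase u hu x1 hx1 e1 he1 hueq
          obtain ⟨-, hf1z⟩ := hbase w hw x1 hx1 f1 hf1 hweq
          exact hz'.nconf e1 he1z f1 hf1z hc1
        · obtain ⟨hb1, -⟩ := hbase u hu x1 hx1 e1 he1 hueq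
          obtain ⟨hb2, -⟩ := hbase w hw x2 hx2 f1 hf1 hweq
          exact hne12 (hb1.trans hb2.symm)
        · have hu' : u ∈ x := hLmem u hu e1 hueq
          have he1y : e1 ∈ y := show tagL e1 ∈ x from hueq ▸ hu'
          obtain ⟨hb, -⟩ := hbase w hw x1 hx1 f1 hf1 hweq
          subst hb
          obtain ⟨e', he', hce⟩ := hex
          exact hycfg.nconf e1 he1y e' he' hce
        · have hw' : w ∈ x := hLmem w hw e1 hweq
          have he1y : e1 ∈ y := show tagL e1 ∈ x from hweq ▸ hw'
          obtain ⟨hb, -⟩ := hbase u hu x1 hx1 f1 hf1 hueq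
          subst hb
          obtain ⟨e', he', hce⟩ := hex
          exact hycfg.nconf e1 he1y e' he' hce
    have heq := hmax _ hcfg'' (Set.subset_union_left)
    ext e
    constructor
    · intro he
      have hmem : tagC (encSet y) e ∈ x ∪ tagC (encSet y) '' z' := Or.inr ⟨e, he, rfl⟩
      rw [heq] at hmem
      exact ⟨hz'.subset_ev he, hmem⟩
    · exact fun he => hzz' he
  · -- no copy events
    push_neg at hcop
    have hdecL : x = tagL '' y := by
      ext u
      constructor
      · intro hu
        rcases seq_ev_mem.1 (hcfg.subset_ev hu) with ⟨e, he, rfl⟩ | ⟨x1, hx1, e, he, rfl⟩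
        · exact ⟨e, hu, rfl⟩
        · exact absurd hu (hcop x1 hx1 e he)
      · rintro ⟨e, he, rfl⟩; exact he
    have hyM : y ∈ E1.MaxC := by
      refine ⟨hycfg, ?_⟩
      intro y' hy' hyy'
      have hcfg' : (esSeq E1 E2).Config (tagL '' y') := by
        refine ⟨?_, ?_, ?_⟩
        · rintro u ⟨e, he, rfl⟩
          exact Or.inl ⟨e, hy'.subset_ev he, rfl⟩
        · rintro u ⟨e, he, rfl⟩ v hv hle
          rcases hle with ⟨e1, he1, f1, hf1, hle1, hveq, hueq⟩ |
            ⟨x1, hx1, e1, he1, f1, hf1, hle1, hveq, hueq⟩ |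
            ⟨x1, hx1, e1, he1, f1, hf1, hsbj, hveq, hueq⟩
          · obtain rfl := tagL_eq_tagL.1 hueq
            exact ⟨e1, hy'.down e he e1 he1 hle1, hveq.symm⟩
          · exact absurd hueq tagL_ne_tagC
          · exact absurd hueq tagL_ne_tagC
        · rintro u ⟨e, he, rfl⟩ w ⟨f, hf, rfl⟩ hc
          rcases hc with ⟨e1, he1, f1, hf1, hc1, hueq, hweq⟩ |
            ⟨x1, hx1, e1, he1, f1, hf1, hc1, hueq, hweq⟩ |
            ⟨x1, hx1, x2, hx2, hne12, e1, he1, f1, hf1, hueq, hweq⟩ |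
            ⟨x1, hx1, e1, he1, hex, f1, hf1, (⟨hueq, hweq⟩ | ⟨hueq, hweq⟩)⟩
          · obtain rfl := tagL_eq_tagL.1 hueq
            obtain rfl := tagL_eq_tagL.1 hweq
            exact hy'.nconf e he f hf hc1
          · exact absurd hueq tagL_ne_tagC
          · exact absurd hueq tagL_ne_tagC
          · exact absurd hweq tagL_ne_tagC
          · exact absurd hueq tagL_ne_tagC
      have hsub : x ⊆ tagL '' y' := by
        rw [hdecL]
        exact Set.image_mono  hyy'
      have heq := hmax _ hcfg' hsub
      ext e
      constructor
      · intro he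
        have hmem : tagL e ∈ tagL '' y' := ⟨e, he, rfl⟩
        rw [heq] at hmem
        exact hmem
      · exact fun he => hyy' he
    have hE2 : E2.ev = ∅ := by
      by_contra hne2
      obtain ⟨e2, he2, hmin2'⟩ := ES.exists_minIn hfin2 hrk2 subset_rfl
        (Set.nonempty_iff_ne_empty.2 hne2)
      have hnocC : ∀ v ∈ x ∪ ({tagC (encSet y) e2} : Set ℕ), ∀ x1 ∈ E1.MaxC,
          ∀ f1 ∈ E2.ev, v = tagC (encSet x1) f1 →
          encSet x1 = encSet y ∧ f1 = e2 := by
        rintro v (hv | rfl) x1 h1 f1 hf1 heq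
        · exact absurd (heq ▸ hv) (hcop x1 h1 f1 hf1)
        · obtain ⟨hk, hef⟩ := tagC_eq_tagC.1 heq
          exact ⟨hk.symm, hef.symm⟩
      have hLmem : ∀ v ∈ x ∪ ({tagC (encSet y) e2} : Set ℕ), ∀ e1 : ℕ,
          v = tagL e1 → v ∈ x := by
        rintro v (hv | rfl) e1 heq
        · exact hv
        · exact absurd heq tagC_ne_tagL
      have hcfg' : (esSeq E1 E2).Config (x ∪ {tagC (encSet y) e2}) := by
        refine ⟨?_, ?_, ?_⟩
        · rintro u (hu | rfl)
          · exact hcfg.subset_ev hu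
          · exact seq_ev_mem.2 (Or.inr ⟨y, hyM, e2, he2, rfl⟩)
        · rintro u (hu | rfl) v hv hle
          · exact Or.inl (hcfg.down u hu v hv hle)
          · rcases hle with ⟨e1, he1, f1, hf1, hle1, hveq, hueq⟩ |
              ⟨x1, hx1, e1, he1, f1, hf1, hle1, hveq, hueq⟩ |
              ⟨x1, hx1, e1, he1, f1, hf1, hsbj, hveq, hueq⟩
            · exact absurd hueq tagC_ne_tagL
            · obtain ⟨hk, hef⟩ := tagC_eq_tagC.1 hueq
              have he12 : e1 = e2 := hmin2' e1 he1 (hef ▸ hle1)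
              right
              rw [Set.mem_singleton_iff, hveq, he12, ← hk]
            · obtain ⟨hk, hef⟩ := tagC_eq_tagC.1 hueq
              have hb : x1 = y := henc hfin1 hx1 hyM hk.symm
              subst hb
              left
              rw [hveq]
              exact he1
        · rintro u hu w hw hc
          rcases hc with ⟨e1, he1, f1, hf1, hc1, hueq, hweq⟩ |
            ⟨x1, hx1, e1, he1, f1, hf1, hc1, hueq, hweq⟩ |
            ⟨x1, hx1, x2, hx2, hne12, e1, he1, f1, hf1, hueq, hweq⟩ |
            ⟨x1, hx1, e1, he1, hex, f1, hf1, (⟨hueq, hweq⟩ | ⟨hueq, hweq⟩)⟩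
          · exact hcfg.nconf u (hLmem u hu e1 hueq) w (hLmem w hw f1 hweq)
              (Or.inl ⟨e1, he1, f1, hf1, hc1, hueq, hweq⟩)
          · obtain ⟨-, he12⟩ := hnocC u hu x1 hx1 e1 he1 hueq
            obtain ⟨-, hf12⟩ := hnocC w hw x1 hx1 f1 hf1 hweq
            rw [he12, hf12] at hc1
            exact hirr2 e2 he2 hc1
          · obtain ⟨hk1, -⟩ := hnocC u hu x1 hx1 e1 he1 hueq
            obtain ⟨hk2, -⟩ := hnocC w hw x2 hx2 f1 hf1 hweq
            exact hne12 (henc hfin1 hx1 hx2 (hk1.trans hk2.symm))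
          · have hu' : u ∈ x := hLmem u hu e1 hueq
            have he1y : e1 ∈ y := show tagL e1 ∈ x from hueq ▸ hu'
            obtain ⟨hk, -⟩ := hnocC w hw x1 hx1 f1 hf1 hweq
            have hb : x1 = y := henc hfin1 hx1 hyM hk
            subst hb
            obtain ⟨e', he', hce⟩ := hex
            exact hycfg.nconf e1 he1y e' he' hce
          · have hw' : w ∈ x := hLmem w hw e1 hweq
            have he1y : e1 ∈ y := show tagL e1 ∈ x from hweq ▸ hw'
            obtain ⟨hk, -⟩ := hnocC u hu x1 hx1 f1 hf1 hueq
            have hb : x1 = y := henc hfin1 hx1 hyM hk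
            subst hb
            obtain ⟨e', he', hce⟩ := hex
            exact hycfg.nconf e1 he1y e' he' hce
      have heq := hmax _ hcfg' (Set.subset_union_left)
      have hmem : tagC (encSet y) e2 ∈ x ∪ {tagC (encSet y) e2} := Or.inr rfl
      rw [heq] at hmem
      exact hcop y hyM e2 he2 hmem
    have hzM : (∅ : Set ℕ) ∈ E2.MaxC := by
      refine ⟨E2.config_empty, ?_⟩
      intro z hz _
      exact Set.subset_empty_iff.1 (hE2 ▸ hz.subset_ev)
    refine ⟨y, hyM, ∅, hzM, by rw [hdecL]; simp⟩

end Aux6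
section Aux7

variable {P M : Type} {E1 E2 : ES P M}

lemma seq_proj_ev_mem {B : P} {u : ℕ} : u ∈ ((esSeq E1 E2).proj B).ev ↔
    u ∈ (esSeq E1 E2).ev ∧ ((esSeq E1 E2).lbl u).sbj = B := Iff.rfl

/-- If every maximal configuration of `E1` contains a `B`-event, the minimal `B`-labels
of the sequential composition are those of `E1`. -/
lemma minLblP_seq_left {B : P}
    (hallB : ∀ x ∈ E1.MaxC, ∃ e ∈ x, (E1.lbl e).sbj = B) :
    minLblP (esSeq E1 E2) B = minLblP E1 B := by
  have hminEv : ((esSeq E1 E2).proj B).minEv = tagL '' (E1.proj B).minEv := by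
    ext u
    constructor
    · rintro ⟨⟨huev, husbj⟩, humin⟩
      rcases seq_ev_mem.1 huev with ⟨e, he, rfl⟩ | ⟨x1, hx1, f, hf, rfl⟩
      · rw [seq_lbl_tagL] at husbj
        refine ⟨e, ⟨⟨he, husbj⟩, ?_⟩, rfl⟩
        intro f hfp hle
        have hv : tagL f ∈ ((esSeq E1 E2).proj B).ev := by
          refine ⟨seq_ev_mem.2 (Or.inl ⟨f, hfp.1, rfl⟩), ?_⟩
          rw [seq_lbl_tagL]; exact hfp.2
        have hle' : ((esSeq E1 E2).proj B).le (tagL f) (tagL e) :=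
          ⟨Or.inl ⟨f, hfp.1, e, he, hle.1, rfl, rfl⟩, hv, huev,
            by rw [seq_lbl_tagL]; exact husbj⟩
        exact tagL_eq_tagL.1 (humin (tagL f) hv hle')
      · -- a copy event cannot be minimal: some `B`-event of `x1` precedes it
        exfalso
        rw [seq_lbl_tagC] at husbj
        obtain ⟨e, hex, hesbj⟩ := hallB x1 hx1
        have heev : e ∈ E1.ev := hx1.config.subset_ev hex
        have hv : tagL e ∈ ((esSeq E1 E2).proj B).ev := by
          refine ⟨seq_ev_mem.2 (Or.inl ⟨e, heev, rfl⟩), ?_⟩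
          rw [seq_lbl_tagL]; exact hesbj
        have hsbjeq : (E1.lbl e).sbj = (E2.lbl f).sbj := by rw [hesbj, husbj]
        have hle' : ((esSeq E1 E2).proj B).le (tagL e) (tagC (encSet x1) f) :=
          ⟨Or.inr (Or.inr ⟨x1, hx1, e, hex, f, hf, hsbjeq, rfl, rfl⟩), hv, huev,
            by rw [seq_lbl_tagC]; exact husbj⟩
        exact absurd (humin (tagL e) hv hle') tagL_ne_tagC
    · rintro ⟨e, ⟨⟨he, hs⟩, hmin⟩, rfl⟩
      have huev : tagL e ∈ ((esSeq E1 E2).proj B).ev := by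
        refine ⟨seq_ev_mem.2 (Or.inl ⟨e, he, rfl⟩), ?_⟩
        rw [seq_lbl_tagL]; exact hs
      refine ⟨huev, ?_⟩
      rintro v ⟨hvev, hvsbj⟩ ⟨hvle, -, -⟩
      rcases hvle with ⟨e1, he1, f1, hf1, hle1, hveq, hueq⟩ |
        ⟨x1, hx1, e1, he1, f1, hf1, hle1, hveq, hueq⟩ |
        ⟨x1, hx1, e1, he1, f1, hf1, hsbj, hveq, hueq⟩
      · obtain rfl := tagL_eq_tagL.1 hueq
        subst hveq
        rw [seq_lbl_tagL] at hvsbj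
        have := hmin e1 ⟨he1, hvsbj⟩ ⟨hle1, ⟨he1, hvsbj⟩, he, hs⟩
        rw [this]
      · exact absurd hueq tagL_ne_tagC
      · exact absurd hueq tagL_ne_tagC
  rw [minLblP, ES.minLbl, hminEv, minLblP, ES.minLbl]
  ext l
  simp only [Set.mem_image]
  constructor
  · rintro ⟨u, ⟨e, he, rfl⟩, rfl⟩
    exact ⟨e, he, (seq_lbl_tagL e).symm⟩
  · rintro ⟨e, he, rfl⟩
    exact ⟨tagL e, ⟨e, he, rfl⟩, seq_lbl_tagL e⟩

/-- If `B` has no events in `E1`, the minimal `B`-labels of the sequential composition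
are those of `E2` (provided `E1` has some maximal configuration). -/
lemma minLblP_seq_right {B : P}
    (hnoB : ∀ e ∈ E1.ev, (E1.lbl e).sbj ≠ B) (hMne : E1.MaxC.Nonempty) :
    minLblP (esSeq E1 E2) B = minLblP E2 B := by
  have hminEv : ∀ u, u ∈ ((esSeq E1 E2).proj B).minEv ↔
      ∃ x1 ∈ E1.MaxC, ∃ f ∈ (E2.proj B).minEv, u = tagC (encSet x1) f := by
    intro u
    constructor
    · rintro ⟨⟨huev, husbj⟩, humin⟩
      rcases seq_ev_mem.1 huev with ⟨e, he, rfl⟩ | ⟨x1, hx1, f, hf, rfl⟩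
      · rw [seq_lbl_tagL] at husbj
        exact absurd husbj (hnoB e he)
      · rw [seq_lbl_tagC] at husbj
        refine ⟨x1, hx1, f, ⟨⟨hf, husbj⟩, ?_⟩, rfl⟩
        intro f' hf' hle
        have hv : tagC (encSet x1) f' ∈ ((esSeq E1 E2).proj B).ev := by
          refine ⟨seq_ev_mem.2 (Or.inr ⟨x1, hx1, f', hf'.1, rfl⟩), ?_⟩
          rw [seq_lbl_tagC]; exact hf'.2
        have hle' : ((esSeq E1 E2).proj B).le (tagC (encSet x1) f') (tagC (encSet x1) f) :=
          ⟨Or.inr (Or.inl ⟨x1, hx1, f', hf'.1, f, hf, hle.1, rfl, rfl⟩), hv, huev,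
            by rw [seq_lbl_tagC]; exact husbj⟩
        exact (tagC_eq_tagC.1 (humin _ hv hle')).2
    · rintro ⟨x1, hx1, f, ⟨⟨hf, hs⟩, hmin⟩, rfl⟩
      have huev : tagC (encSet x1) f ∈ ((esSeq E1 E2).proj B).ev := by
        refine ⟨seq_ev_mem.2 (Or.inr ⟨x1, hx1, f, hf, rfl⟩), ?_⟩
        rw [seq_lbl_tagC]; exact hs
      refine ⟨huev, ?_⟩
      rintro v ⟨hvev, hvsbj⟩ ⟨hvle, -, -⟩
      rcases hvle with ⟨e1, he1, f1, hf1, hle1, hveq, hueq⟩ |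
        ⟨x1', hx1', e1, he1, f1, hf1, hle1, hveq, hueq⟩ |
        ⟨x1', hx1', e1, he1, f1, hf1, hsbj, hveq, hueq⟩
      · exact absurd hueq.symm tagL_ne_tagC
      · obtain ⟨hk, hef⟩ := tagC_eq_tagC.1 hueq
        subst hveq
        rw [seq_lbl_tagC] at hvsbj
        have he1f : e1 = f := hmin e1 ⟨he1, hvsbj⟩ ⟨hef ▸ hle1, ⟨he1, hvsbj⟩, hf, hs⟩
        rw [he1f, ← hk]
      · subst hveq
        rw [seq_lbl_tagL] at hvsbj
        exact absurd hvsbj (hnoB e1 (hx1'.config.subset_ev he1))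
  rw [minLblP, ES.minLbl, minLblP, ES.minLbl]
  ext l
  simp only [Set.mem_image]
  constructor
  · rintro ⟨u, hu, rfl⟩
    obtain ⟨x1, hx1, f, hfm, rfl⟩ := (hminEv u).1 hu
    exact ⟨f, hfm, (seq_lbl_tagC _ f).symm⟩
  · rintro ⟨f, hfm, rfl⟩
    obtain ⟨x1, hx1⟩ := hMne
    exact ⟨tagC (encSet x1) f, (hminEv _).2 ⟨x1, hx1, f, hfm, rfl⟩, seq_lbl_tagC _ f⟩

lemma minLblP_empty_of_no_events {B : P} {E : ES P M}
    (hnoB : ∀ e ∈ E.ev, (E.lbl e).sbj ≠ B) : minLblP E B = ∅ := by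
  ext l
  simp only [minLblP, ES.minLbl, ES.minEv, ES.minIn, Set.mem_image,
    Set.mem_empty_iff_false, iff_false]
  rintro ⟨e, ⟨⟨he, hs⟩, -⟩, -⟩
  exact hnoB e he hs

end Aux7
section Aux8

variable {P M : Type} {E1 E2 : ES P M}

lemma good_seq {Γ1 Γ2 : Set P} {φ1 φ2 Λ1 Λ2 : Set (Label P M)}
    (h1 : Good Γ1 φ1 Λ1 E1) (h2 : Good Γ2 φ2 Λ2 E2) :
    Good (Γ1 ∪ Γ2) (φ1 ∪ lminus φ2 Γ1) (Λ2 ∪ lminus Λ1 Γ2) (esSeq E1 E2) := by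
  have hM : E1.MaxC.Finite :=
    Set.Finite.subset h1.fin.finite_subsets (fun x hx => hx.config.subset_ev)
  constructor
  · -- finiteness
    have hbig : {u | ∃ x ∈ E1.MaxC, ∃ e ∈ E2.ev, u = tagC (encSet x) e} ⊆
        ⋃ x ∈ E1.MaxC, tagC (encSet x) '' E2.ev := by
      rintro u ⟨x, hx, e, he, rfl⟩
      exact Set.mem_biUnion hx ⟨e, he, rfl⟩
    exact (h1.fin.image tagL).union
      ((Set.Finite.biUnion hM (fun x _ => h2.fin.image _)).subset hbig)
  · -- rank
    obtain ⟨r1, hr1⟩ := h1.rk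
    obtain ⟨r2, hr2⟩ := h2.rk
    obtain ⟨N, hN⟩ := (h1.fin.image r1).bddAbove
    refine ⟨fun u => if (Nat.unpair u).1 = 0 then r1 (Nat.unpair u).2
      else N + 1 + r2 (Nat.unpair (Nat.unpair u).2).2, ?_⟩
    rintro u hu v hv (⟨e, he, f, hf, hlef, rfl, rfl⟩ |
      ⟨x1, hx1, e, he, f, hf, hlef, rfl, rfl⟩ |
      ⟨x1, hx1, e, he, f, hf, hs, rfl, rfl⟩) hne
    · have h' := hr1 e he f hf hlef (fun h => hne (by rw [h]))
      simpa using h'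
    · have h' := hr2 e he f hf hlef (fun h => hne (by rw [h]))
      simp only [unpair_tagC, Nat.unpair_pair]
      norm_num
      omega
    · have h' : r1 e ≤ N := hN (Set.mem_image_of_mem r1 (hx1.config.subset_ev he))
      simp only [unpair_tagL, unpair_tagC, Nat.unpair_pair]
      norm_num
      omega
  · intro e he
    rcases seq_ev_mem.1 he with ⟨e', he', rfl⟩ | ⟨x1, hx1, e', he', rfl⟩
    · rw [seq_lbl_tagL]; exact h1.proper e' he'
    · rw [seq_lbl_tagC]; exact h2.proper e' he'
  · intro e he
    rcases seq_ev_mem.1 he with ⟨e', he', rfl⟩ | ⟨x1, hx1, e', he', rfl⟩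
    · rw [seq_lbl_tagL]; exact Or.inl (h1.sbjin e' he')
    · rw [seq_lbl_tagC]; exact Or.inr (h2.sbjin e' he')
  · intro e he hin
    rcases seq_ev_mem.1 he with ⟨e', he', rfl⟩ | ⟨x1, hx1, e', he', rfl⟩
    · rw [seq_lbl_tagL] at hin
      obtain ⟨o, ho, hout, hle, hne⟩ := h1.inpB e' he' hin
      refine ⟨tagL o, seq_ev_mem.2 (Or.inl ⟨o, ho, rfl⟩), ?_, ?_, ?_⟩
      · rw [seq_lbl_tagL]; exact hout
      · exact Or.inl ⟨o, ho, e', he', hle, rfl, rfl⟩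
      · simpa using hne
    · rw [seq_lbl_tagC] at hin
      obtain ⟨o, ho, hout, hle, hne⟩ := h2.inpB e' he' hin
      refine ⟨tagC (encSet x1) o, seq_ev_mem.2 (Or.inr ⟨x1, hx1, o, ho, rfl⟩), ?_, ?_, ?_⟩
      · rw [seq_lbl_tagC]; exact hout
      · exact Or.inr (Or.inl ⟨x1, hx1, o, ho, e', he', hle, rfl, rfl⟩)
      · simpa using hne
  · -- conflict irreflexive
    rintro u hu (⟨e1, he1, f1, hf1, hc1, hueq, hweq⟩ |
      ⟨x1, hx1, e1, he1, f1, hf1, hc1, hueq, hweq⟩ |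
      ⟨x1, hx1, x2, hx2, hne12, e1, he1, f1, hf1, hueq, hweq⟩ |
      ⟨x1, hx1, e1, he1, hex, f1, hf1, (⟨hueq, hweq⟩ | ⟨hueq, hweq⟩)⟩)
    · obtain rfl := tagL_eq_tagL.1 (hueq.symm.trans hweq)
      exact h1.cirr e1 he1 hc1
    · obtain ⟨-, hef⟩ := tagC_eq_tagC.1 (hueq.symm.trans hweq)
      subst hef
      exact h2.cirr e1 he1 hc1
    · obtain ⟨hk, -⟩ := tagC_eq_tagC.1 (hueq.symm.trans hweq)
      exact hne12 (henc h1.fin hx1 hx2 hk)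
    · exact tagL_ne_tagC (hueq.symm.trans hweq)
    · exact tagC_ne_tagL (hueq.symm.trans hweq)
  · -- conflict symmetric
    rintro u hu w hw (⟨e1, he1, f1, hf1, hc1, hueq, hweq⟩ |
      ⟨x1, hx1, e1, he1, f1, hf1, hc1, hueq, hweq⟩ |
      ⟨x1, hx1, x2, hx2, hne12, e1, he1, f1, hf1, hueq, hweq⟩ |
      ⟨x1, hx1, e1, he1, hex, f1, hf1, (⟨hueq, hweq⟩ | ⟨hueq, hweq⟩)⟩)
    · exact Or.inl ⟨f1, hf1, e1, he1, h1.csym e1 he1 f1 hf1 hc1, hweq, hueq⟩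
    · exact Or.inr (Or.inl ⟨x1, hx1, f1, hf1, e1, he1, h2.csym e1 he1 f1 hf1 hc1,
        hweq, hueq⟩)
    · exact Or.inr (Or.inr (Or.inl ⟨x2, hx2, x1, hx1, Ne.symm hne12, f1, hf1, e1, he1,
        hweq, hueq⟩))
    · exact Or.inr (Or.inr (Or.inr ⟨x1, hx1, e1, he1, hex, f1, hf1, Or.inr ⟨hweq, hueq⟩⟩))
    · exact Or.inr (Or.inr (Or.inr ⟨x1, hx1, e1, he1, hex, f1, hf1, Or.inl ⟨hweq, hueq⟩⟩))
  · -- cover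
    rintro B (hB | hB)
    · obtain ⟨e, he, hs⟩ := h1.cover B hB
      exact ⟨tagL e, seq_ev_mem.2 (Or.inl ⟨e, he, rfl⟩),
        by rw [seq_lbl_tagL]; exact hs⟩
    · obtain ⟨e, he, hs⟩ := h2.cover B hB
      obtain ⟨x1, hx1⟩ := ES.maxC_nonempty h1.fin
      exact ⟨tagC (encSet x1) e, seq_ev_mem.2 (Or.inr ⟨x1, hx1, e, he, rfl⟩),
        by rw [seq_lbl_tagC]; exact hs⟩
  · -- minp
    intro B
    by_cases hB1 : ∃ e ∈ E1.ev, (E1.lbl e).sbj = B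
    · have hBΓ1 : B ∈ Γ1 := by
        obtain ⟨e, he, hs⟩ := hB1
        exact hs ▸ h1.sbjin e he
      have hallB : ∀ x ∈ E1.MaxC, ∃ e ∈ x, (E1.lbl e).sbj = B := by
        intro x hx
        obtain ⟨⟨l, e, he, -⟩, -⟩ := h1.maxc x hx B hBΓ1
        exact ⟨e, he.1.1, he.1.2⟩
      rw [minLblP_seq_left hallB, h1.minp, hat_union, hat_lminus_of_mem hBΓ1,
        Set.union_empty]
    · push_neg at hB1
      have hBΓ1 : B ∉ Γ1 := fun hB => by
        obtain ⟨e, he, hs⟩ := h1.cover B hB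
        exact hB1 e he hs
      rw [minLblP_seq_right hB1 (ES.maxC_nonempty h1.fin), h2.minp, hat_union,
        hat_lminus_of_not_mem hBΓ1]
      have hφ1 : hat φ1 B = ∅ := by
        rw [← h1.minp]
        exact minLblP_empty_of_no_events hB1
      rw [hφ1, Set.empty_union]
  · -- maxc
    intro x hx B hB
    obtain ⟨y, hyM, z, hzM, rfl⟩ := maxC_seq h1.fin h1.csym h2.fin h2.rk h2.cirr hx
    by_cases hB2 : B ∈ Γ2
    · obtain ⟨hne2, hsub2⟩ := h2.maxc z hzM B hB2
      obtain ⟨l0, f0, hf0, hl0⟩ := hne2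
      have hpc : (esSeq E1 E2).projC (tagL '' y ∪ tagC (encSet y) '' z) B =
          tagL '' (E1.projC y B) ∪ tagC (encSet y) '' (E2.projC z B) := by
        ext u
        constructor
        · rintro ⟨(⟨e, he, rfl⟩ | ⟨e, he, rfl⟩), hs⟩
          · rw [seq_lbl_tagL] at hs; exact Or.inl ⟨e, ⟨he, hs⟩, rfl⟩
          · rw [seq_lbl_tagC] at hs; exact Or.inr ⟨e, ⟨he, hs⟩, rfl⟩
        · rintro (⟨e, ⟨he, hs⟩, rfl⟩ | ⟨e, ⟨he, hs⟩, rfl⟩)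
          · exact ⟨Or.inl ⟨e, he, rfl⟩, by rw [seq_lbl_tagL]; exact hs⟩
          · exact ⟨Or.inr ⟨e, he, rfl⟩, by rw [seq_lbl_tagC]; exact hs⟩
      have hmaxIn : (esSeq E1 E2).maxIn
          (tagL '' (E1.projC y B) ∪ tagC (encSet y) '' (E2.projC z B)) =
          tagC (encSet y) '' (E2.maxIn (E2.projC z B)) := by
        ext u
        constructor
        · rintro ⟨(⟨e, he, rfl⟩ | ⟨f, hfz, rfl⟩), hmaxu⟩
          · exfalso
            have hv : tagC (encSet y) f0 ∈
                tagL '' (E1.projC y B) ∪ tagC (encSet y) '' (E2.projC z B) :=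
              Or.inr ⟨f0, hf0.1, rfl⟩
            have hle : (esSeq E1 E2).le (tagL e) (tagC (encSet y) f0) :=
              Or.inr (Or.inr ⟨y, hyM, e, he.1, f0, hzM.config.subset_ev hf0.1.1,
                by rw [he.2, hf0.1.2], rfl, rfl⟩)
            exact tagC_ne_tagL (hmaxu _ hv hle)
          · refine ⟨f, ⟨hfz, ?_⟩, rfl⟩
            intro f' hf' hlef
            have hv : tagC (encSet y) f' ∈
                tagL '' (E1.projC y B) ∪ tagC (encSet y) '' (E2.projC z B) :=
              Or.inr ⟨f', hf', rfl⟩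
            have hle : (esSeq E1 E2).le (tagC (encSet y) f) (tagC (encSet y) f') :=
              Or.inr (Or.inl ⟨y, hyM, f, hzM.config.subset_ev hfz.1, f',
                hzM.config.subset_ev hf'.1, hlef, rfl, rfl⟩)
            exact (tagC_eq_tagC.1 (hmaxu _ hv hle)).2
        · rintro ⟨f, ⟨hfz, hmaxf⟩, rfl⟩
          refine ⟨Or.inr ⟨f, hfz, rfl⟩, ?_⟩
          rintro v (⟨e, he, rfl⟩ | ⟨f', hf', rfl⟩) hle
          · rcases hle with ⟨e1, he1, f1, hf1, hle1, hueq, hveq⟩ |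
              ⟨x1, hx1, e1, he1, f1, hf1, hle1, hueq, hveq⟩ |
              ⟨x1, hx1, e1, he1, f1, hf1, hs, hueq, hveq⟩
            · exact absurd hueq tagC_ne_tagL
            · exact absurd hveq tagL_ne_tagC
            · exact absurd hueq tagC_ne_tagL
          · rcases hle with ⟨e1, he1, f1, hf1, hle1, hueq, hveq⟩ |
              ⟨x1, hx1, e1, he1, f1, hf1, hle1, hueq, hveq⟩ |
              ⟨x1, hx1, e1, he1, f1, hf1, hs, hueq, hveq⟩
            · exact absurd hueq tagC_ne_tagL
            · obtain ⟨hk, hef⟩ := tagC_eq_tagC.1 hueq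
              obtain ⟨hk', hef'⟩ := tagC_eq_tagC.1 hveq
              have : f' = f := hmaxf f' hf' (by rw [hef, hef']; exact hle1)
              rw [this]
            · exact absurd hueq tagC_ne_tagL
      rw [hpc, hmaxIn]
      constructor
      · exact ⟨E2.lbl f0, tagC (encSet y) f0, ⟨f0, hf0, rfl⟩, seq_lbl_tagC _ f0⟩
      · rintro l ⟨u, ⟨f, hfm, rfl⟩, rfl⟩
        rw [seq_lbl_tagC, hat_union]
        exact Or.inl (hsub2 ⟨f, hfm, rfl⟩)
    · have hB1 : B ∈ Γ1 := hB.resolve_right hB2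
      obtain ⟨hne1, hsub1⟩ := h1.maxc y hyM B hB1
      have hpc : (esSeq E1 E2).projC (tagL '' y ∪ tagC (encSet y) '' z) B =
          tagL '' (E1.projC y B) := by
        ext u
        constructor
        · rintro ⟨(⟨e, he, rfl⟩ | ⟨e, he, rfl⟩), hs⟩
          · rw [seq_lbl_tagL] at hs; exact ⟨e, ⟨he, hs⟩, rfl⟩
          · rw [seq_lbl_tagC] at hs
            exact absurd (hs ▸ h2.sbjin e (hzM.config.subset_ev he)) hB2
        · rintro ⟨e, ⟨he, hs⟩, rfl⟩
          exact ⟨Or.inl ⟨e, he, rfl⟩, by rw [seq_lbl_tagL]; exact hs⟩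
      have hmaxIn : (esSeq E1 E2).maxIn (tagL '' (E1.projC y B)) =
          tagL '' (E1.maxIn (E1.projC y B)) := by
        ext u
        constructor
        · rintro ⟨⟨e, he, rfl⟩, hmaxu⟩
          refine ⟨e, ⟨he, ?_⟩, rfl⟩
          intro f' hf' hlef
          have hle : (esSeq E1 E2).le (tagL e) (tagL f') :=
            Or.inl ⟨e, hyM.config.subset_ev he.1, f', hyM.config.subset_ev hf'.1,
              hlef, rfl, rfl⟩
          exact tagL_eq_tagL.1 (hmaxu (tagL f') ⟨f', hf', rfl⟩ hle)
        · rintro ⟨e, ⟨he, hmaxe⟩, rfl⟩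
          refine ⟨⟨e, he, rfl⟩, ?_⟩
          rintro v ⟨f', hf', rfl⟩ hle
          rcases hle with ⟨e1, he1, f1, hf1, hle1, hueq, hveq⟩ |
            ⟨x1, hx1, e1, he1, f1, hf1, hle1, hueq, hveq⟩ |
            ⟨x1, hx1, e1, he1, f1, hf1, hs, hueq, hveq⟩
          · obtain rfl := tagL_eq_tagL.1 hueq
            obtain rfl := tagL_eq_tagL.1 hveq
            rw [hmaxe f' hf' hle1]
          · exact absurd hueq tagL_ne_tagC
          · exact absurd hveq tagL_ne_tagC
      rw [hpc, hmaxIn]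
      constructor
      · obtain ⟨l0, e0, he0, hl0⟩ := hne1
        exact ⟨E1.lbl e0, tagL e0, ⟨e0, he0, rfl⟩, seq_lbl_tagL e0⟩
      · rintro l ⟨u, ⟨e, hem, rfl⟩, rfl⟩
        rw [seq_lbl_tagL, hat_union, hat_lminus_of_not_mem hB2]
        exact Or.inr (hsub1 ⟨e, hem, rfl⟩)

end Aux8
section Aux9

variable {P M : Type}

lemma sbjSet_union (U V : Set (Label P M)) : sbjSet (U ∪ V) = sbjSet U ∪ sbjSet V :=
  Set.image_union _ _ _

lemma sbjSet_lminus (φ : Set (Label P M)) (Γ : Set P) :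
    sbjSet (lminus φ Γ) = sbjSet φ \ Γ := by
  ext B
  simp only [mem_sbjSet, Set.mem_diff, lminus, Set.mem_setOf_eq]
  constructor
  · rintro ⟨l, ⟨hl, hns⟩, rfl⟩
    exact ⟨⟨l, hl, rfl⟩, hns⟩
  · rintro ⟨⟨l, hl, rfl⟩, hns⟩
    exact ⟨l, ⟨hl, hns⟩, rfl⟩

lemma typing_sbj {Γ : Set P} {g : GC P M} {φ Λ : Set (Label P M)}
    (h : Typing Γ g φ Λ) : sbjSet φ = Γ ∧ sbjSet Λ = Γ := by
  induction h with
  | temp => constructor <;> simp [sbjSet]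
  | @tint a b m hab =>
      constructor <;>
      · show sbjSet {Label.out a b m, Label.inp a b m} = {a, b}
        ext B
        simp only [sbjSet, Set.image_insert_eq, Set.image_singleton, sbj_out, sbj_inp]
  | tseq h1 h2 ih1 ih2 =>
      constructor
      · rw [sbjSet_union, sbjSet_lminus, ih1.1, ih2.1, Set.union_diff_self]
      · rw [sbjSet_union, sbjSet_lminus, ih1.2, ih2.2, Set.union_diff_self,
          Set.union_comm]
  | tpar h1 h2 hd ih1 ih2 =>
      constructor
      · rw [sbjSet_union, ih1.1, ih2.1]
      · rw [sbjSet_union, ih1.2, ih2.2]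
  | tch h1 h2 hc ih1 ih2 =>
      constructor
      · rw [sbjSet_union, ih1.1, ih2.1, Set.union_self]
      · rw [sbjSet_union, ih1.2, ih2.2, Set.union_self]

lemma typing_parts {Γ : Set P} {g : GC P M} {φ Λ : Set (Label P M)}
    (h : Typing Γ g φ Λ) : Γ ⊆ parts g := by
  induction h with
  | temp => exact subset_rfl
  | tint hab => exact subset_rfl
  | tseq h1 h2 ih1 ih2 => exact Set.union_subset_union ih1 ih2
  | tpar h1 h2 hd ih1 ih2 => exact Set.union_subset_union ih1 ih2
  | tch h1 h2 hc ih1 ih2 => exact fun B hB => Or.inl (ih1 hB)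

lemma typing_inp {Γ : Set P} {g : GC P M} {φ Λ : Set (Label P M)}
    (h : Typing Γ g φ Λ) : ∀ a b m, Label.inp a b m ∈ Λ → a ∈ Γ := by
  induction h with
  | temp => intro a b m hl; exact absurd hl (Set.notMem_empty _)
  | @tint a' b' m' hab =>
      rintro a b m (hl | hl)
      · cases hl
      · cases hl; exact Or.inl rfl
  | tseq h1 h2 ih1 ih2 =>
      rintro a b m (hl | hl)
      · exact Or.inr (ih2 a b m hl)
      · exact Or.inl (ih1 a b m hl.1)
  | tpar h1 h2 hd ih1 ih2 =>
      rintro a b m (hl | hl)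
      · exact Or.inl (ih1 a b m hl)
      · exact Or.inr (ih2 a b m hl)
  | tch h1 h2 hc ih1 ih2 =>
      rintro a b m (hl | hl)
      · exact ih1 a b m hl
      · exact ih2 a b m hl

lemma typing_good [Nonempty P] [Nonempty M] {Γ : Set P} {g : GC P M}
    {φ Λ : Set (Label P M)} (h : Typing Γ g φ Λ) :
    ∃ E, gsem g = some E ∧ Good Γ φ Λ E := by
  induction h with
  | temp => exact ⟨esEmpty, rfl, good_empty⟩
  | @tint a b m hab => exact ⟨esAct a b m, by simp [gsem, hab], good_act hab⟩
  | tseq h1 h2 ih1 ih2 =>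
      obtain ⟨E1, hg1, hG1⟩ := ih1
      obtain ⟨E2, hg2, hG2⟩ := ih2
      exact ⟨esSeq E1 E2, by simp [gsem, hg1, hg2], good_seq hG1 hG2⟩
  | @tpar Γ1 Γ2 g1 g2 φ1 φ2 Λ1 Λ2 h1 h2 hdisj ih1 ih2 =>
      obtain ⟨E1, hg1, hG1⟩ := ih1
      obtain ⟨E2, hg2, hG2⟩ := ih2
      have hdisjL : Disjoint E1.lblSet E2.lblSet := by
        rw [Set.disjoint_left]
        rintro l ⟨e, he, rfl⟩ ⟨f, hf, hlf⟩
        have hs1 := hG1.sbjin e he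
        have hs2 := hG2.sbjin f hf
        rw [hlf] at hs2
        have hmem : (E1.lbl e).sbj ∈ Γ1 ∩ Γ2 := ⟨hs1, hs2⟩
        rw [hdisj] at hmem
        exact hmem
      exact ⟨esTensor E1 E2, by simp [gsem, hg1, hg2, hdisjL],
        good_tensor hG1 hG2 hdisj⟩
  | tch h1 h2 hcomp ih1 ih2 =>
      obtain ⟨E1, hg1, hG1⟩ := ih1
      obtain ⟨E2, hg2, hG2⟩ := ih2
      have hwb := wb_of_compch hG1 hG2 hcomp
      exact ⟨esSum E1 E2, by simp [gsem, hg1, hg2, hwb], good_sum hG1 hG2⟩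

end Aux9
/-- Typing enforces refinement (Lemma): for a refinable action `A→m1…mn:B1,…,Bn`
(encoded by `A` and the nonempty list `l = [(m1,B1),…,(mn,Bn)]` with pairwise distinct
`Bi`), if `Π`, `φ`, `Λ` satisfy the three t-ref conditions then any ground `G` with
`Π ⊢ G : ⟨φ,Λ⟩` derivable refines the action. -/
theorem typing_enforces_refinement {P M : Type} [Infinite P] [Infinite M]
    (A : P) (l : List (M × P)) (hl : l ≠ []) (hnd : (l.map Prod.snd).Nodup)
    {Γ : Set P} {φ Λ : Set (Label P M)}
    (h1 : sbjSet φ = Γ) (h1' : sbjSet Λ = Γ)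
    (h2 : sbjSet (φ ∩ Lout) = {A})
    (h3 : ∀ p ∈ l, ∃ C : P, hat Λ p.2 = {Label.inp C p.2 p.1}) :
    ∀ G : GC P M, Typing Γ G φ Λ → Refines G A l := by
  intro G hT
  obtain ⟨E, hg, hG⟩ := typing_good hT
  refine ⟨E, hg, ?_, ?_⟩
  · -- subjects of minimal labels are exactly {A}
    have hφA : ∃ l ∈ φ, l ∈ Lout ∧ l.sbj = A := by
      have hA : A ∈ sbjSet (φ ∩ Lout) := by rw [h2]; rfl
      obtain ⟨l, hl, hs⟩ := mem_sbjSet.1 hA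
      exact ⟨l, hl.1, hl.2, hs⟩
    obtain ⟨l, hlφ, hlout, hlsbj⟩ := hφA
    have hminA : l ∈ minLblP E A := by
      rw [hG.minp]
      exact ⟨hlφ, hlsbj⟩
    obtain ⟨e0, he0, -⟩ := hminA
    have hev_ne : E.ev.Nonempty := ⟨e0, he0.1.1⟩
    have hminEv_ne : E.minEv.Nonempty :=
      ES.exists_minIn hG.fin hG.rk subset_rfl hev_ne
    have hsub : sbjSet E.minLbl ⊆ {A} := by
      rintro B hB
      obtain ⟨l', hl', rfl⟩ := mem_sbjSet.1 hB
      obtain ⟨e, he, rfl⟩ := hl'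
      have heev : e ∈ E.ev := he.1
      have hlout' : E.lbl e ∈ Lout := by
        rcases hG.proper e heev with h | h
        · exact h
        · obtain ⟨o, ho, hoout, hole, hone⟩ := hG.inpB e heev h
          exact absurd (he.2 o ho hole) hone
      have hmem : E.lbl e ∈ hat φ ((E.lbl e).sbj) := by
        rw [← hG.minp]
        exact ⟨e, ES.minEv_mem_proj_minEv he, rfl⟩
      have hin : (E.lbl e).sbj ∈ sbjSet (φ ∩ Lout) :=
        mem_sbjSet.2 ⟨E.lbl e, ⟨hmem.1, hlout'⟩, rfl⟩
      rw [h2] at hin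
      exact hin
    obtain ⟨e0', he0'⟩ := hminEv_ne
    have hAin : A ∈ sbjSet E.minLbl := by
      have hBmem : (E.lbl e0').sbj ∈ sbjSet E.minLbl :=
        mem_sbjSet.2 ⟨E.lbl e0', ⟨e0', he0', rfl⟩, rfl⟩
      have heq : (E.lbl e0').sbj ∈ ({A} : Set P) := hsub hBmem
      exact heq ▸ hBmem
    exact Set.Subset.antisymm hsub (Set.singleton_subset_iff.2 hAin)
  · -- condition on maximal configurations
    intro x hxM p hp
    obtain ⟨C, hC⟩ := h3 p hp
    have hinpΛ : Label.inp C p.2 p.1 ∈ Λ := by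
      have : Label.inp C p.2 p.1 ∈ hat Λ p.2 := by rw [hC]; rfl
      exact this.1
    have hBΓ : p.2 ∈ Γ := by
      rw [← h1']
      exact mem_sbjSet.2 ⟨Label.inp C p.2 p.1, hinpΛ, rfl⟩
    obtain ⟨hne, hsubm⟩ := hG.maxc x hxM p.2 hBΓ
    obtain ⟨l, hl⟩ := hne
    have hlhat : l ∈ hat Λ p.2 := hsubm hl
    rw [hC, Set.mem_singleton_iff] at hlhat
    refine ⟨C, ?_, ?_⟩
    · exact typing_parts hT (typing_inp hT C p.2 p.1 hinpΛ)
    · exact hlhat ▸ hl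

end Choreo
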